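/- arXiv:2007.05554 — 5 statements merged into one kernel-verified Lean document; each statement's English description precedes it below -/
import Mathlib

section
/- Let X ⊆ ℝ^d be open, let a < b, let F : ℝ^d × ℝ → ℝ be continuously differentiable on a neighborhood of X × [a,b] with ∂F/∂w(x,w) > 0 for all x ∈ X and w ∈ [a,b], and let p : ℝ → ℝ be continuous with p(w) > 0 for all w ∈ [a,b]. Then the function G is continuously differentiable on the open set U, and the partial derivative ∂G/∂t(x,t) is strictly positive for every (x,t) ∈ U. -/
open MeasureTheory Set Filter Topology

/-- The single-monotone-interval case of the paper's Lemma 1: the CDF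
`G(x,t) = ∫_{ {w ∈ [a,b] : F(x,w) ≤ t} } p(w) dw` is continuously differentiable on the
open set `U = {(x,t) : x ∈ X, F(x,a) < t < F(x,b)}`, with strictly positive density
`∂G/∂t(x,t)` on `U`. -/
theorem cdf_contDiff_and_density_pos
    {d : ℕ} (X : Set (EuclideanSpace ℝ (Fin d))) (hX : IsOpen X)
    (a b : ℝ) (hab : a < b)
    (F : EuclideanSpace ℝ (Fin d) × ℝ → ℝ)
    (V : Set (EuclideanSpace ℝ (Fin d) × ℝ)) (hV : IsOpen V)
    (hXV : X ×ˢ Icc a b ⊆ V) (hF : ContDiffOn ℝ 1 F V)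
    (hFw : ∀ x ∈ X, ∀ w ∈ Icc a b, 0 < deriv (fun w' => F (x, w')) w)
    (p : ℝ → ℝ) (hp : Continuous p) (hppos : ∀ w ∈ Icc a b, 0 < p w) :
    IsOpen {q : EuclideanSpace ℝ (Fin d) × ℝ | q.1 ∈ X ∧ F (q.1, a) < q.2 ∧ q.2 < F (q.1, b)} ∧
    ContDiffOn ℝ 1
      (fun q : EuclideanSpace ℝ (Fin d) × ℝ =>
        ∫ w in {w | w ∈ Icc a b ∧ F (q.1, w) ≤ q.2}, p w)
      {q : EuclideanSpace ℝ (Fin d) × ℝ | q.1 ∈ X ∧ F (q.1, a) < q.2 ∧ q.2 < F (q.1, b)} ∧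
    ∀ q ∈ {q : EuclideanSpace ℝ (Fin d) × ℝ | q.1 ∈ X ∧ F (q.1, a) < q.2 ∧ q.2 < F (q.1, b)},
      0 < deriv (fun t : ℝ => ∫ w in {w | w ∈ Icc a b ∧ F (q.1, w) ≤ t}, p w) q.2 := by
  have hVmem : ∀ x ∈ X, ∀ w ∈ Icc a b, ((x, w) : _ × ℝ) ∈ V := fun x hx w hw => hXV ⟨hx, hw⟩
  have hFdiff : ∀ z ∈ V, ContDiffAt ℝ 1 F z := fun z hz => hF.contDiffAt (hV.mem_nhds hz)
  -- derivative of the partial map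
  have hfD : ∀ x ∈ X, ∀ w ∈ Icc a b,
      HasDerivAt (fun w' => F (x, w')) (fderiv ℝ F (x, w) (0, 1)) w := by
    intro x hx w hw
    have h1 : HasFDerivAt F (fderiv ℝ F (x, w)) (x, w) :=
      ((hFdiff _ (hVmem x hx w hw)).differentiableAt one_ne_zero).hasFDerivAt
    have h2 : HasDerivAt (fun w' : ℝ => ((x : EuclideanSpace ℝ (Fin d)), w')) (0, 1) w :=
      HasDerivAt.prodMk (hasDerivAt_const w x) (hasDerivAt_id w)
    exact h1.comp_hasDerivAt w h2
  have hderiv_pos : ∀ x ∈ X, ∀ w ∈ Icc a b, 0 < fderiv ℝ F (x, w) (0, 1) := by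
    intro x hx w hw
    have h := (hfD x hx w hw).deriv
    rw [← h]
    exact hFw x hx w hw
  -- continuity of the partial map
  have hfc : ∀ x ∈ X, ContinuousOn (fun w => F (x, w)) (Icc a b) := by
    intro x hx
    have : ContinuousOn F V := hF.continuousOn
    exact (this.comp (continuous_const.prodMk continuous_id).continuousOn
      (fun w hw => hVmem x hx w hw))
  have hmono : ∀ x ∈ X, StrictMonoOn (fun w => F (x, w)) (Icc a b) := by
    intro x hx
    apply strictMonoOn_of_deriv_pos (convex_Icc a b) (hfc x hx)
    intro w hw
    rw [interior_Icc] at hw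
    exact hFw x hx w (Ioo_subset_Icc_self hw)
  -- set equality
  have hset : ∀ x ∈ X, ∀ w' ∈ Ioo a b, ∀ t, F (x, w') = t →
      {w | w ∈ Icc a b ∧ F (x, w) ≤ t} = Icc a w' := by
    intro x hx w' hw' t ht
    have hw'I : w' ∈ Icc a b := Ioo_subset_Icc_self hw'
    ext w
    simp only [mem_setOf_eq, mem_Icc]
    constructor
    · rintro ⟨hwI, hFle⟩
      refine ⟨hwI.1, ?_⟩
      by_contra hlt
      push_neg at hlt
      have hlt2 : F (x, w') < F (x, w) := hmono x hx hw'I hwI hlt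
      rw [ht] at hlt2
      exact absurd hFle (not_le.2 hlt2)
    · rintro ⟨h1, h2⟩
      have hwI : w ∈ Icc a b := ⟨h1, h2.trans hw'I.2⟩
      refine ⟨hwI, ?_⟩
      rw [← ht]
      exact (hmono x hx).monotoneOn hwI hw'I h2
  -- primitive of p
  set Pf : ℝ → ℝ := fun c => ∫ w in a..c, p w with hPfdef
  have hPd : ∀ c, HasDerivAt Pf (p c) c := fun c =>
    intervalIntegral.integral_hasDerivAt_right (hp.intervalIntegrable a c)
      (hp.aestronglyMeasurable.stronglyMeasurableAtFilter) hp.continuousAt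
  have hPf : ContDiff ℝ 1 Pf := contDiff_one_iff_deriv.2
    ⟨fun c => (hPd c).differentiableAt, by
      have h : deriv Pf = p := funext fun c => (hPd c).deriv
      rw [h]; exact hp⟩
  have hGint : ∀ x ∈ X, ∀ w' ∈ Ioo a b, ∀ t, F (x, w') = t →
      (∫ w in {w | w ∈ Icc a b ∧ F (x, w) ≤ t}, p w) = Pf w' := by
    intro x hx w' hw' t ht
    rw [hset x hx w' hw' t ht]
    show (∫ w in Icc a w', p w) = ∫ w in a..w', p w
    rw [intervalIntegral.integral_of_le hw'.1.le, integral_Icc_eq_integral_Ioc]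
  -- openness of U
  have hUopen : IsOpen {q : EuclideanSpace ℝ (Fin d) × ℝ |
      q.1 ∈ X ∧ F (q.1, a) < q.2 ∧ q.2 < F (q.1, b)} := by
    rw [isOpen_iff_mem_nhds]
    rintro q ⟨hqX, h1, h2⟩
    have hca : ContinuousAt (fun q' : EuclideanSpace ℝ (Fin d) × ℝ => F (q'.1, a)) q := by
      have hi : ContinuousAt (fun q' : EuclideanSpace ℝ (Fin d) × ℝ => ((q'.1, a) : _ × ℝ)) q :=
        (continuous_fst.prodMk continuous_const).continuousAt
      exact Filter.Tendsto.comp ((hFdiff _ (hVmem q.1 hqX a ⟨le_refl a, hab.le⟩)).continuousAt) hi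
    have hcb : ContinuousAt (fun q' : EuclideanSpace ℝ (Fin d) × ℝ => F (q'.1, b)) q := by
      have hi : ContinuousAt (fun q' : EuclideanSpace ℝ (Fin d) × ℝ => ((q'.1, b) : _ × ℝ)) q :=
        (continuous_fst.prodMk continuous_const).continuousAt
      exact Filter.Tendsto.comp ((hFdiff _ (hVmem q.1 hqX b ⟨hab.le, le_refl b⟩)).continuousAt) hi
    filter_upwards [continuous_fst.continuousAt.preimage_mem_nhds (hX.mem_nhds hqX),
      hca.eventually_lt continuousAt_snd h1,
      continuousAt_snd.eventually_lt hcb h2] with q' hq1 hq2 hq3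
    exact ⟨hq1, hq2, hq3⟩
  -- the main local analysis
  have key : ∀ q₀ ∈ {q : EuclideanSpace ℝ (Fin d) × ℝ |
      q.1 ∈ X ∧ F (q.1, a) < q.2 ∧ q.2 < F (q.1, b)},
      ContDiffAt ℝ 1 (fun q : EuclideanSpace ℝ (Fin d) × ℝ =>
        ∫ w in {w | w ∈ Icc a b ∧ F (q.1, w) ≤ q.2}, p w) q₀ ∧
      0 < deriv (fun t : ℝ => ∫ w in {w | w ∈ Icc a b ∧ F (q₀.1, w) ≤ t}, p w) q₀.2 := by
    rintro ⟨x₀, t₀⟩ ⟨hx, h1, h2⟩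
    simp only at hx h1 h2 ⊢
    -- find the crossing point w₀
    obtain ⟨w₀, hw₀, hFw₀⟩ : ∃ w₀ ∈ Ioo a b, F (x₀, w₀) = t₀ := by
      have him := intermediate_value_Ioo hab.le (hfc x₀ hx)
      obtain ⟨w₀, hw₀, hFw₀⟩ := him ⟨h1, h2⟩
      exact ⟨w₀, hw₀, hFw₀⟩
    have hw₀I : w₀ ∈ Icc a b := Ioo_subset_Icc_self hw₀
    have hz₀V : ((x₀, w₀) : _ × ℝ) ∈ V := hVmem _ hx w₀ hw₀I
    set DF := fderiv ℝ F (x₀, w₀) with hDFdef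
    set c := DF (0, 1) with hcdef
    have hcpos : 0 < c := hderiv_pos _ hx w₀ hw₀I
    set A : EuclideanSpace ℝ (Fin d) →L[ℝ] ℝ :=
      DF.comp (ContinuousLinearMap.inl ℝ (EuclideanSpace ℝ (Fin d)) ℝ) with hAdef
    have hDFsplit : ∀ u s, DF (u, s) = A u + c * s := by
      intro u s
      have hsum : ((u, s) : _ × ℝ)
          = ((u, 0) : _ × ℝ) + s • (((0 : EuclideanSpace ℝ (Fin d)), (1 : ℝ)) : _ × ℝ) := by
        simp [Prod.ext_iff]
      rw [hsum, map_add, DF.map_smul]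
      simp [hAdef, smul_eq_mul, mul_comm]
      exact Or.inl hcdef.symm
    set J : (EuclideanSpace ℝ (Fin d) × ℝ) →L[ℝ] (EuclideanSpace ℝ (Fin d) × ℝ) :=
      (ContinuousLinearMap.fst ℝ (EuclideanSpace ℝ (Fin d)) ℝ).prod DF with hJdef
    set K : (EuclideanSpace ℝ (Fin d) × ℝ) →L[ℝ] (EuclideanSpace ℝ (Fin d) × ℝ) :=
      (ContinuousLinearMap.fst ℝ (EuclideanSpace ℝ (Fin d)) ℝ).prod
        (c⁻¹ • ((ContinuousLinearMap.snd ℝ (EuclideanSpace ℝ (Fin d)) ℝ) -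
          A.comp (ContinuousLinearMap.fst ℝ (EuclideanSpace ℝ (Fin d)) ℝ))) with hKdef
    have hKJ : Function.LeftInverse K J := by
      rintro ⟨u, s⟩
      simp [hJdef, hKdef, hDFsplit, Prod.ext_iff]
      try field_simp
      try ring
    have hJK : Function.RightInverse K J := by
      rintro ⟨u, s⟩
      simp [hJdef, hKdef, hDFsplit, Prod.ext_iff]
      try field_simp
      try ring
    set e := ContinuousLinearEquiv.equivOfInverse J K hKJ hJK with hedef
    set Φ : EuclideanSpace ℝ (Fin d) × ℝ → EuclideanSpace ℝ (Fin d) × ℝ :=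
      fun z => (z.1, F z) with hΦdef
    have hΦq : Φ (x₀, w₀) = (x₀, t₀) := by simp [hΦdef, hFw₀]
    have hΦcd : ContDiffAt ℝ 1 Φ (x₀, w₀) := ContDiffAt.prodMk contDiffAt_fst (hFdiff _ hz₀V)
    have hΦfd : HasFDerivAt Φ (e : _ →L[ℝ] _) (x₀, w₀) := by
      have hDFat : HasFDerivAt F DF (x₀, w₀) :=
        ((hFdiff _ hz₀V).differentiableAt one_ne_zero).hasFDerivAt
      exact HasFDerivAt.prodMk hasFDerivAt_fst hDFat
    set g := hΦcd.localInverse hΦfd one_ne_zero with hgdef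
    have hgcd : ContDiffAt ℝ 1 g (x₀, t₀) := hΦq ▸ hΦcd.to_localInverse hΦfd one_ne_zero
    have hgq : g (x₀, t₀) = (x₀, w₀) := hΦq ▸ hΦcd.localInverse_apply_image hΦfd one_ne_zero
    have hgc : ContinuousAt g (x₀, t₀) := hgcd.continuousAt
    have hright : ∀ᶠ y in 𝓝 (x₀, t₀), Φ (g y) = y := by
      have h := (hΦcd.hasStrictFDerivAt' hΦfd one_ne_zero).eventually_right_inverse
      rwa [hΦq] at h
    -- eventual identification of the CDF with Pf ∘ (g ·).2
    have hev : ∀ᶠ q : EuclideanSpace ℝ (Fin d) × ℝ in 𝓝 (x₀, t₀),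
        (∫ w in {w | w ∈ Icc a b ∧ F (q.1, w) ≤ q.2}, p w) = Pf ((g q).2) := by
      have hX' : ∀ᶠ q : EuclideanSpace ℝ (Fin d) × ℝ in 𝓝 (x₀, t₀), q.1 ∈ X :=
        continuous_fst.continuousAt.preimage_mem_nhds (hX.mem_nhds hx)
      have hIoo : ∀ᶠ q : EuclideanSpace ℝ (Fin d) × ℝ in 𝓝 (x₀, t₀), (g q).2 ∈ Ioo a b := by
        have hc2 : ContinuousAt (fun q => (g q).2) (x₀, t₀) := continuousAt_snd.comp hgc
        apply hc2.preimage_mem_nhds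
        rw [hgq]
        exact isOpen_Ioo.mem_nhds hw₀
      filter_upwards [hX', hIoo, hright] with q hqX hqI hqr
      have h1' := congrArg Prod.fst hqr
      have h2'' := congrArg Prod.snd hqr
      have h1 : (g q).1 = q.1 := h1'
      have h2 : F (g q) = q.2 := h2''
      have h2' : F (q.1, (g q).2) = q.2 := by rw [← h1, Prod.mk.eta]; exact h2
      exact hGint q.1 hqX _ hqI q.2 h2'
    constructor
    · exact ((hPf.contDiffAt).comp (x₀, t₀)
        (contDiffAt_snd.comp (x₀, t₀) hgcd)).congr_of_eventuallyEq hev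
    · -- positivity of the t-derivative
      have hten : Tendsto (fun t : ℝ => ((x₀, t) : _ × ℝ)) (𝓝 t₀) (𝓝 (x₀, t₀)) :=
        ((continuous_const.prodMk continuous_id).tendsto t₀)
      set u : ℝ → ℝ := fun t => (g (x₀, t)).2 with hudef
      have hev' : ∀ᶠ t in 𝓝 t₀,
          (∫ w in {w | w ∈ Icc a b ∧ F (x₀, w) ≤ t}, p w) = Pf (u t) := hten.eventually hev
      have hu0 : u t₀ = w₀ := by rw [hudef]; simp [hgq]
      have hufi : ∀ᶠ t in 𝓝 t₀, F (x₀, u t) = t := by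
        filter_upwards [hten.eventually hright] with t ht
        have ha1' := congrArg Prod.fst ht
        have ha2' := congrArg Prod.snd ht
        have ha1 : (g (x₀, t)).1 = x₀ := ha1'
        have ha2 : F (g (x₀, t)) = t := ha2'
        show F (x₀, (g (x₀, t)).2) = t
        nth_rewrite 1 [← ha1]
        rw [Prod.mk.eta]
        exact ha2
      have huc : ContinuousAt u t₀ := continuousAt_snd.comp (hgc.comp (continuous_const.prodMk continuous_id).continuousAt)
      have hfd' : HasDerivAt (fun w' => F (x₀, w')) c (u t₀) := by
        rw [hu0]
        exact hfD x₀ hx w₀ hw₀I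
      have hud : HasDerivAt u c⁻¹ t₀ :=
        HasDerivAt.of_local_left_inverse huc hfd' (ne_of_gt hcpos) hufi
      have hcomp : HasDerivAt (fun t => Pf (u t)) (p (u t₀) * c⁻¹) t₀ :=
        (hPd (u t₀)).comp t₀ hud
      have hde : deriv (fun t : ℝ => ∫ w in {w | w ∈ Icc a b ∧ F (x₀, w) ≤ t}, p w) t₀
          = p (u t₀) * c⁻¹ := by
        rw [Filter.EventuallyEq.deriv_eq hev']
        exact hcomp.deriv
      rw [hde, hu0]
      exact mul_pos (hppos w₀ hw₀I) (inv_pos.2 hcpos)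
  exact ⟨hUopen, fun q hq => ((key q hq).1).contDiffWithinAt, fun q hq => (key q hq).2⟩
end

section
/- Let a < b, let f : ℝ → ℝ be continuously differentiable on a neighborhood of [a,b], and let p : ℝ → ℝ be continuous. Let t ∈ ℝ be such that f(a) ≠ t, f(b) ≠ t, the level set R = {w ∈ [a,b] : f(w) = t} is finite, and f'(w) ≠ 0 for every w ∈ R. Then the function H(t') := ∫_{{w ∈ [a,b] : f(w) ≤ t'}} p(w) dw is differentiable at t with H'(t) = Σ_{w ∈ R} p(w) / |f'(w)|. -/
open MeasureTheory Set
open Filter Topology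


lemma loc_inc (f : ℝ → ℝ) (c d w : ℝ) (hc : c < w) (hd : w < d)
    (hmono : StrictMonoOn f (Icc c d))
    (hder : HasStrictDerivAt f (deriv f w) w) (hpos : 0 < deriv f w)
    (p : ℝ → ℝ) (hp : Continuous p) :
    ∃ h : ℝ → ℝ, HasDerivAt h (p w / |deriv f w|) (f w) ∧
      ∀ᶠ t' in 𝓝 (f w), h t' = ∫ x in {x | x ∈ Ioo c d ∧ f x ≤ t'}, p x := by
  have hne : deriv f w ≠ 0 := ne_of_gt hpos
  set g := hder.localInverse f (deriv f w) w hne with hgdef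
  have hgd : HasStrictDerivAt g (deriv f w)⁻¹ (f w) := hder.to_localInverse hne
  have hgw : g (f w) = w := (hder.hasStrictFDerivAt_equiv hne).localInverse_apply_image
  have hright : ∀ᶠ t' in 𝓝 (f w), f (g t') = t' :=
    (hder.hasStrictFDerivAt_equiv hne).eventually_right_inverse
  have hgcont : ContinuousAt g (f w) :=
    (hder.hasStrictFDerivAt_equiv hne).localInverse_continuousAt
  rw [ContinuousAt, hgw] at hgcont
  have hmem : ∀ᶠ t' in 𝓝 (f w), g t' ∈ Ioo c d := hgcont (Ioo_mem_nhds hc hd)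
  refine ⟨fun t' => ∫ x in c..(g t'), p x, ?_, ?_⟩
  · have hF : HasDerivAt (fun y => ∫ x in c..y, p x) (p w) w :=
      (hp.integral_hasStrictDerivAt c w).hasDerivAt
    have hF' : HasDerivAt (fun y => ∫ x in c..y, p x) (p w) (g (f w)) := by
      rw [hgw]; exact hF
    have := hF'.comp (f w) hgd.hasDerivAt
    rw [abs_of_pos hpos, div_eq_mul_inv]
    exact this
  · filter_upwards [hright, hmem] with t' h1 h2
    have hset : {x | x ∈ Ioo c d ∧ f x ≤ t'} = Ioc c (g t') := by
      ext x
      simp only [mem_setOf_eq, mem_Ioo, mem_Ioc]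
      constructor
      · rintro ⟨⟨hx1, hx2⟩, hle⟩
        refine ⟨hx1, ?_⟩
        rw [← h1] at hle
        exact (hmono.le_iff_le ⟨le_of_lt hx1, le_of_lt hx2⟩
          ⟨le_of_lt h2.1, le_of_lt h2.2⟩).mp hle
      · rintro ⟨hx1, hx2⟩
        have hxd : x < d := lt_of_le_of_lt hx2 h2.2
        refine ⟨⟨hx1, hxd⟩, ?_⟩
        rw [← h1]
        exact (hmono.le_iff_le ⟨le_of_lt hx1, le_of_lt hxd⟩
          ⟨le_of_lt h2.1, le_of_lt h2.2⟩).mpr hx2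
    rw [hset, intervalIntegral.integral_of_le (le_of_lt h2.1)]

lemma loc_dec (f : ℝ → ℝ) (c d w : ℝ) (hc : c < w) (hd : w < d)
    (hmono : StrictAntiOn f (Icc c d))
    (hder : HasStrictDerivAt f (deriv f w) w) (hpos : deriv f w < 0)
    (p : ℝ → ℝ) (hp : Continuous p) :
    ∃ h : ℝ → ℝ, HasDerivAt h (p w / |deriv f w|) (f w) ∧
      ∀ᶠ t' in 𝓝 (f w), h t' = ∫ x in {x | x ∈ Ioo c d ∧ f x ≤ t'}, p x := by
  have hne : deriv f w ≠ 0 := ne_of_lt hpos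
  set g := hder.localInverse f (deriv f w) w hne with hgdef
  have hgd : HasStrictDerivAt g (deriv f w)⁻¹ (f w) := hder.to_localInverse hne
  have hgw : g (f w) = w := (hder.hasStrictFDerivAt_equiv hne).localInverse_apply_image
  have hright : ∀ᶠ t' in 𝓝 (f w), f (g t') = t' :=
    (hder.hasStrictFDerivAt_equiv hne).eventually_right_inverse
  have hgcont : ContinuousAt g (f w) :=
    (hder.hasStrictFDerivAt_equiv hne).localInverse_continuousAt
  rw [ContinuousAt, hgw] at hgcont
  have hmem : ∀ᶠ t' in 𝓝 (f w), g t' ∈ Ioo c d := hgcont (Ioo_mem_nhds hc hd)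
  refine ⟨fun t' => ∫ x in (g t')..d, p x, ?_, ?_⟩
  · have hF : HasDerivAt (fun y => ∫ x in y..d, p x) (-p w) w := by
      have h1 : HasDerivAt (fun y => ∫ x in d..y, p x) (p w) w :=
        (hp.integral_hasStrictDerivAt d w).hasDerivAt
      have h2 := h1.neg
      refine h2.congr_of_eventuallyEq ?_
      filter_upwards with y
      rw [intervalIntegral.integral_symm]
      rfl
    have hF' : HasDerivAt (fun y => ∫ x in y..d, p x) (-p w) (g (f w)) := by
      rw [hgw]; exact hF
    have := hF'.comp (f w) hgd.hasDerivAt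
    rw [abs_of_neg hpos, div_neg, div_eq_mul_inv, ← neg_mul]
    exact this
  · filter_upwards [hright, hmem] with t' h1 h2
    have hset : {x | x ∈ Ioo c d ∧ f x ≤ t'} = Ico (g t') d := by
      ext x
      simp only [mem_setOf_eq, mem_Ioo, mem_Ico]
      constructor
      · rintro ⟨⟨hx1, hx2⟩, hle⟩
        refine ⟨?_, hx2⟩
        rw [← h1] at hle
        exact (hmono.le_iff_ge ⟨le_of_lt hx1, le_of_lt hx2⟩
          ⟨le_of_lt h2.1, le_of_lt h2.2⟩).mp hle
      · rintro ⟨hx1, hx2⟩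
        have hxc : c < x := lt_of_lt_of_le h2.1 hx1
        refine ⟨⟨hxc, hx2⟩, ?_⟩
        rw [← h1]
        exact (hmono.le_iff_ge ⟨le_of_lt hxc, le_of_lt hx2⟩
          ⟨le_of_lt h2.1, le_of_lt h2.2⟩).mpr hx1
    rw [hset, intervalIntegral.integral_of_le (le_of_lt h2.2),
      MeasureTheory.integral_Ico_eq_integral_Ioo, MeasureTheory.integral_Ioc_eq_integral_Ioo]

lemma point_lemma (a b : ℝ) (f : ℝ → ℝ) (V : Set ℝ) (hV : IsOpen V) (hsub : Icc a b ⊆ V)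
    (hf : ContDiffOn ℝ 1 f V) (p : ℝ → ℝ) (hp : Continuous p)
    (w : ℝ) (hw : w ∈ Ioo a b) (hne : deriv f w ≠ 0) (ρ : ℝ) (hρ : 0 < ρ) :
    ∃ (c d : ℝ) (h : ℝ → ℝ), a < c ∧ c < w ∧ w < d ∧ d < b ∧ w - ρ < c ∧ d < w + ρ ∧
      HasDerivAt h (p w / |deriv f w|) (f w) ∧
      ∀ᶠ t' in 𝓝 (f w), h t' = ∫ x in {x | x ∈ Ioo c d ∧ f x ≤ t'}, p x := by
  have hwV : w ∈ V := hsub ⟨hw.1.le, hw.2.le⟩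
  have hdc : ContinuousOn (deriv f) V := hf.continuousOn_deriv_of_isOpen hV le_rfl
  have hca : ContinuousAt (deriv f) w := hdc.continuousAt (hV.mem_nhds hwV)
  have hder : HasStrictDerivAt f (deriv f w) w :=
    (hf.contDiffAt (hV.mem_nhds hwV)).hasStrictDerivAt one_ne_zero
  rcases lt_or_gt_of_ne hne with hneg | hpos
  · -- decreasing case
    have hev : ∀ᶠ x in 𝓝 w, deriv f x < 0 ∧ x ∈ V :=
      (hca.eventually (eventually_lt_nhds hneg)).and (hV.eventually_mem hwV)
    obtain ⟨r, hr0, hrball⟩ := Metric.eventually_nhds_iff_ball.mp hev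
    set δ := min (r/2) (min (ρ/2) (min ((w-a)/2) ((b-w)/2))) with hδdef
    have hδ0 : 0 < δ := by
      have h1 : 0 < w - a := by linarith [hw.1]
      have h2 : 0 < b - w := by linarith [hw.2]
      positivity
    have hδr : δ ≤ r/2 := min_le_left _ _
    have hδρ : δ ≤ ρ/2 := le_trans (min_le_right _ _) (min_le_left _ _)
    have hδa : δ ≤ (w-a)/2 := le_trans (min_le_right _ _) (le_trans (min_le_right _ _) (min_le_left _ _))
    have hδb : δ ≤ (b-w)/2 := le_trans (min_le_right _ _) (le_trans (min_le_right _ _) (min_le_right _ _))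
    have hball : Icc (w - δ) (w + δ) ⊆ Metric.ball w r := by
      intro x hx
      rw [Metric.mem_ball, Real.dist_eq]
      have : |x - w| ≤ δ := abs_le.mpr ⟨by linarith [hx.1], by linarith [hx.2]⟩
      linarith
    have hanti : StrictAntiOn f (Icc (w - δ) (w + δ)) := by
      apply strictAntiOn_of_deriv_neg (convex_Icc _ _)
      · exact hf.continuousOn.mono fun x hx => (hrball x (hball hx)).2
      · intro x hx
        rw [interior_Icc] at hx
        exact (hrball x (hball (Ioo_subset_Icc_self hx))).1
    obtain ⟨h, hh1, hh2⟩ := loc_dec f (w - δ) (w + δ) w (by linarith) (by linarith) hanti hder hneg p hp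
    exact ⟨w - δ, w + δ, h, by linarith [hw.1], by linarith, by linarith, by linarith [hw.2],
      by linarith, by linarith, hh1, hh2⟩
  · -- increasing case
    have hev : ∀ᶠ x in 𝓝 w, 0 < deriv f x ∧ x ∈ V :=
      (hca.eventually (eventually_gt_nhds hpos)).and (hV.eventually_mem hwV)
    obtain ⟨r, hr0, hrball⟩ := Metric.eventually_nhds_iff_ball.mp hev
    set δ := min (r/2) (min (ρ/2) (min ((w-a)/2) ((b-w)/2))) with hδdef
    have hδ0 : 0 < δ := by
      have h1 : 0 < w - a := by linarith [hw.1]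
      have h2 : 0 < b - w := by linarith [hw.2]
      positivity
    have hδr : δ ≤ r/2 := min_le_left _ _
    have hδρ : δ ≤ ρ/2 := le_trans (min_le_right _ _) (min_le_left _ _)
    have hδa : δ ≤ (w-a)/2 := le_trans (min_le_right _ _) (le_trans (min_le_right _ _) (min_le_left _ _))
    have hδb : δ ≤ (b-w)/2 := le_trans (min_le_right _ _) (le_trans (min_le_right _ _) (min_le_right _ _))
    have hball : Icc (w - δ) (w + δ) ⊆ Metric.ball w r := by
      intro x hx
      rw [Metric.mem_ball, Real.dist_eq]
      have : |x - w| ≤ δ := abs_le.mpr ⟨by linarith [hx.1], by linarith [hx.2]⟩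
      linarith
    have hmono : StrictMonoOn f (Icc (w - δ) (w + δ)) := by
      apply strictMonoOn_of_deriv_pos (convex_Icc _ _)
      · exact hf.continuousOn.mono fun x hx => (hrball x (hball hx)).2
      · intro x hx
        rw [interior_Icc] at hx
        exact (hrball x (hball (Ioo_subset_Icc_self hx))).1
    obtain ⟨h, hh1, hh2⟩ := loc_inc f (w - δ) (w + δ) w (by linarith) (by linarith) hmono hder hpos p hp
    exact ⟨w - δ, w + δ, h, by linarith [hw.1], by linarith, by linarith, by linarith [hw.2],
      by linarith, by linarith, hh1, hh2⟩

/-- The density formula from the proof of the paper's Lemma 1 specialized to a finite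
regular level set: `H(t') = ∫_{ {w ∈ [a,b] : f(w) ≤ t'} } p(w) dw` is differentiable at `t`
with `H'(t) = Σ_{w ∈ R} p(w)/|f'(w)|`, where `R = {w ∈ [a,b] : f(w) = t}`. -/
theorem sublevel_integral_hasDerivAt
    (a b : ℝ) (hab : a < b) (f : ℝ → ℝ)
    (V : Set ℝ) (hV : IsOpen V) (hsub : Icc a b ⊆ V) (hf : ContDiffOn ℝ 1 f V)
    (p : ℝ → ℝ) (hp : Continuous p) (t : ℝ)
    (hfa : f a ≠ t) (hfb : f b ≠ t)
    (hRfin : {w ∈ Icc a b | f w = t}.Finite)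
    (hreg : ∀ w ∈ {w ∈ Icc a b | f w = t}, deriv f w ≠ 0) :
    HasDerivAt (fun t' : ℝ => ∫ w in {w | w ∈ Icc a b ∧ f w ≤ t'}, p w)
      (∑ w ∈ hRfin.toFinset, p w / |deriv f w|) t := by
  classical
  set Rf := hRfin.toFinset with hRfdef
  have hmemRf : ∀ w : ℝ, w ∈ Rf ↔ w ∈ Icc a b ∧ f w = t := by
    intro w
    rw [hRfdef, Set.Finite.mem_toFinset]
    rfl
  have hIoo : ∀ w ∈ Rf, w ∈ Ioo a b := by
    intro w hw
    obtain ⟨⟨h1, h2⟩, hft⟩ := (hmemRf w).mp hw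
    refine ⟨h1.lt_of_ne fun h => hfa (h ▸ hft), h2.lt_of_ne' fun h => hfb (h ▸ hft)⟩
  have hft : ∀ w ∈ Rf, f w = t := fun w hw => ((hmemRf w).mp hw).2
  have hne : ∀ w ∈ Rf, deriv f w ≠ 0 := fun w hw => hreg w ((hmemRf w).mp hw)
  -- separation radii
  have hρex : ∀ w : ℝ, ∃ ρ : ℝ, 0 < ρ ∧ ∀ w' ∈ Rf, w' ≠ w → 2 * ρ ≤ |w' - w| := by
    intro w
    by_cases hnon : (Rf.erase w).Nonempty
    · set m := ((Rf.erase w).image (fun w' => |w' - w|)).min' (hnon.image _) with hmdef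
      have hm0 : 0 < m := by
        have hm : m ∈ (Rf.erase w).image (fun w' => |w' - w|) := Finset.min'_mem _ _
        obtain ⟨w', hw', hw'eq⟩ := Finset.mem_image.mp hm
        have hne' : w' ≠ w := Finset.ne_of_mem_erase hw'
        rw [← hw'eq]
        exact abs_pos.mpr (sub_ne_zero.mpr hne')
      refine ⟨m / 2, by linarith, fun w' hw' hne' => ?_⟩
      have hmem : |w' - w| ∈ (Rf.erase w).image (fun w' => |w' - w|) :=
        Finset.mem_image_of_mem _ (Finset.mem_erase.mpr ⟨hne', hw'⟩)
      have := Finset.min'_le _ _ hmem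
      linarith
    · exact ⟨1, one_pos, fun w' hw' hne' =>
        absurd ⟨w', Finset.mem_erase.mpr ⟨hne', hw'⟩⟩ hnon⟩
  choose ρ hρ0 hρsep using hρex
  -- local data
  have hcdh : ∀ w : ℝ, ∃ (c d : ℝ) (h : ℝ → ℝ), w ∈ Rf →
      a < c ∧ c < w ∧ w < d ∧ d < b ∧ w - ρ w < c ∧ d < w + ρ w ∧
      HasDerivAt h (p w / |deriv f w|) t ∧
      ∀ᶠ t' in 𝓝 t, h t' = ∫ x in {x | x ∈ Ioo c d ∧ f x ≤ t'}, p x := by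
    intro w
    by_cases hw : w ∈ Rf
    · obtain ⟨c, d, h, h1, h2, h3, h4, h5, h6, h7, h8⟩ :=
        point_lemma a b f V hV hsub hf p hp w (hIoo w hw) (hne w hw) (ρ w) (hρ0 w)
      rw [hft w hw] at h7 h8
      exact ⟨c, d, h, fun _ => ⟨h1, h2, h3, h4, h5, h6, h7, h8⟩⟩
    · exact ⟨0, 0, 0, fun h => absurd h hw⟩
  choose c d h hprop using hcdh
  -- disjointness of intervals
  have hdisj : ∀ w ∈ Rf, ∀ w' ∈ Rf, w ≠ w' →
      Disjoint (Ioo (c w) (d w)) (Ioo (c w') (d w')) := by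
    intro w hw w' hw' hww'
    rw [Set.disjoint_left]
    intro x hx hx'
    obtain ⟨_, _, _, _, h5, h6, _, _⟩ := hprop w hw
    obtain ⟨_, _, _, _, h5', h6', _, _⟩ := hprop w' hw'
    have hs1 := hρsep w' (w) hw hww'  -- 2 * ρ w' ≤ |w - w'|
    have hs2 := hρsep w (w') hw' hww'.symm  -- 2 * ρ w ≤ |w' - w|
    have hb1 : w - ρ w < x := lt_trans h5 hx.1
    have hb2 : x < w + ρ w := lt_trans hx.2 h6
    have hb3 : w' - ρ w' < x := lt_trans h5' hx'.1
    have hb4 : x < w' + ρ w' := lt_trans hx'.2 h6'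
    rcases abs_cases (w - w') with ⟨he1, _⟩ | ⟨he1, _⟩ <;>
      rcases abs_cases (w' - w) with ⟨he2, _⟩ | ⟨he2, _⟩ <;> linarith
  -- the compact remainder
  set U := ⋃ w ∈ Rf, Ioo (c w) (d w) with hUdef
  have hUopen : IsOpen U := isOpen_biUnion fun _ _ => isOpen_Ioo
  set K := Icc a b \ U with hKdef
  have hKcomp : IsCompact K := isCompact_Icc.diff hUopen
  have hKsub : K ⊆ Icc a b := diff_subset
  have hKne : ∀ x ∈ K, f x ≠ t := by
    intro x hx hfx
    have hxRf : x ∈ Rf := (hmemRf x).mpr ⟨hx.1, hfx⟩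
    obtain ⟨_, h2, h3, _, _, _, _, _⟩ := hprop x hxRf
    exact hx.2 (mem_biUnion hxRf ⟨h2, h3⟩)
  obtain ⟨ε, hε0, hεK⟩ : ∃ ε > 0, ∀ x ∈ K, ε ≤ |f x - t| := by
    rcases K.eq_empty_or_nonempty with hKe | hKne'
    · exact ⟨1, one_pos, fun x hx => by rw [hKe] at hx; exact absurd hx (notMem_empty x)⟩
    · have hcont : ContinuousOn (fun x => |f x - t|) K :=
        ((hf.continuousOn.mono (hKsub.trans hsub)).sub continuousOn_const).abs
      obtain ⟨x₀, hx₀K, hx₀min⟩ := hKcomp.exists_isMinOn hKne' hcont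
      exact ⟨|f x₀ - t|, abs_pos.mpr (sub_ne_zero.mpr (hKne x₀ hx₀K)),
        fun x hx => hx₀min hx⟩
  -- basic facts about S t'
  have hpint : IntegrableOn p (Icc a b) := hp.integrableOn_Icc
  have hSsub : ∀ t' : ℝ, {x : ℝ | x ∈ Icc a b ∧ f x ≤ t'} ⊆ Icc a b := fun t' x hx => hx.1
  have hSclosed : ∀ t' : ℝ, IsClosed {x : ℝ | x ∈ Icc a b ∧ f x ≤ t'} := by
    intro t'
    have : {x : ℝ | x ∈ Icc a b ∧ f x ≤ t'} = Icc a b ∩ f ⁻¹' Iic t' := rfl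
    rw [this]
    exact ContinuousOn.preimage_isClosed_of_isClosed (hf.continuousOn.mono hsub)
      isClosed_Icc isClosed_Iic
  have hIoosub : ∀ w ∈ Rf, Ioo (c w) (d w) ⊆ Icc a b := by
    intro w hw x hx
    obtain ⟨h1, _, _, h4, _, _, _, _⟩ := hprop w hw
    exact ⟨le_of_lt (lt_trans h1 hx.1), le_of_lt (lt_trans hx.2 h4)⟩
  -- the eventual decomposition
  have hev : ∀ᶠ t' in 𝓝 t,
      (∫ x in {x : ℝ | x ∈ Icc a b ∧ f x ≤ t'}, p x) =
        (∫ x in {x : ℝ | x ∈ Icc a b ∧ f x ≤ t} ∩ K, p x) + ∑ w ∈ Rf, h w t' := by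
    have hball : ∀ᶠ t' in 𝓝 t, |t' - t| < ε := by
      have := Metric.ball_mem_nhds t hε0
      filter_upwards [this] with t' ht'
      rwa [Metric.mem_ball, Real.dist_eq] at ht'
    have hall : ∀ᶠ t' in 𝓝 t, ∀ w ∈ Rf,
        h w t' = ∫ x in {x | x ∈ Ioo (c w) (d w) ∧ f x ≤ t'}, p x :=
      (Filter.eventually_all_finset Rf).mpr fun w hw => (hprop w hw).2.2.2.2.2.2.2
    filter_upwards [hball, hall] with t' htt' hht'
    set S := {x : ℝ | x ∈ Icc a b ∧ f x ≤ t'} with hSdef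
    -- split off K
    have hsplit : S = (S ∩ K) ∪ (S ∩ U) := by
      rw [← inter_union_distrib_left]
      rw [hKdef, diff_union_self]
      exact (inter_eq_left.mpr fun x hx => Or.inl hx.1).symm
    have hdisjKU : Disjoint (S ∩ K) (S ∩ U) := by
      rw [Set.disjoint_left]
      rintro x ⟨_, hxK⟩ ⟨_, hxU⟩
      exact hxK.2 hxU
    have hmeasU : MeasurableSet (S ∩ U) :=
      ((hSclosed t').measurableSet).inter hUopen.measurableSet
    have hint1 : IntegrableOn p (S ∩ K) :=
      hpint.mono_set (inter_subset_left.trans (hSsub t'))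
    have hint2 : IntegrableOn p (S ∩ U) :=
      hpint.mono_set (inter_subset_left.trans (hSsub t'))
    have e1 : (∫ x in S, p x) = (∫ x in S ∩ K, p x) + ∫ x in S ∩ U, p x := by
      conv_lhs => rw [hsplit]
      exact setIntegral_union hdisjKU hmeasU hint1 hint2
    have hSU : S ∩ U = ⋃ w ∈ Rf, S ∩ Ioo (c w) (d w) := by
      rw [hUdef, inter_iUnion₂]
    have e2 : (∫ x in S ∩ U, p x) = ∑ w ∈ Rf, ∫ x in S ∩ Ioo (c w) (d w), p x := by
      rw [hSU]
      exact integral_biUnion_finset Rf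
        (fun w hw => (hSclosed t').measurableSet.inter measurableSet_Ioo)
        (fun w hw w' hw' hww' => (hdisj w hw w' hw' hww').mono inter_subset_right inter_subset_right)
        (fun w hw => hpint.mono_set (inter_subset_left.trans (hSsub t')))
    have htlt := abs_lt.mp htt'
    have e3 : S ∩ K = {x : ℝ | x ∈ Icc a b ∧ f x ≤ t} ∩ K := by
      ext x
      simp only [mem_inter_iff, hSdef, mem_setOf_eq]
      constructor
      · rintro ⟨⟨hxI, hfx⟩, hxK⟩
        refine ⟨⟨hxI, ?_⟩, hxK⟩
        have hεx := hεK x hxK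
        rcases abs_cases (f x - t) with ⟨he, _⟩ | ⟨he, _⟩ <;> linarith
      · rintro ⟨⟨hxI, hfx⟩, hxK⟩
        refine ⟨⟨hxI, ?_⟩, hxK⟩
        have hεx := hεK x hxK
        rcases abs_cases (f x - t) with ⟨he, _⟩ | ⟨he, _⟩ <;> linarith
    have e4 : ∀ w ∈ Rf, S ∩ Ioo (c w) (d w) = {x | x ∈ Ioo (c w) (d w) ∧ f x ≤ t'} := by
      intro w hw
      ext x
      simp only [mem_inter_iff, hSdef, mem_setOf_eq]
      constructor
      · rintro ⟨⟨_, hfx⟩, hxI⟩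
        exact ⟨hxI, hfx⟩
      · rintro ⟨hxI, hfx⟩
        exact ⟨⟨hIoosub w hw hxI, hfx⟩, hxI⟩
    rw [e1, e2, e3]
    congr 1
    apply Finset.sum_congr rfl
    intro w hw
    rw [hht' w hw, ← e4 w hw]
  have hG : HasDerivAt
      (fun t' => (∫ x in {x : ℝ | x ∈ Icc a b ∧ f x ≤ t} ∩ K, p x) + ∑ w ∈ Rf, h w t')
      (0 + ∑ w ∈ Rf, p w / |deriv f w|) t :=
    (hasDerivAt_const t _).add (HasDerivAt.fun_sum fun w hw => (hprop w hw).2.2.2.2.2.2.1)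
  rw [zero_add] at hG
  exact hG.congr_of_eventuallyEq hev
end

section
/- Let a < b, let F : ℝ^d × ℝ → ℝ be continuously differentiable on a neighborhood of {x0} × [a,b] for some x0 ∈ ℝ^d, and let p : ℝ → ℝ be continuous. Let t ∈ ℝ be such that F(x0,a) ≠ t, F(x0,b) ≠ t, the level set R = {w ∈ [a,b] : F(x0,w) = t} is finite, and ∂F/∂w(x0,w) ≠ 0 for every w ∈ R. Then the function x ↦ ∫_{{w ∈ [a,b] : F(x,w) ≤ t}} p(w) dw is differentiable at x0, with differential equal to −Σ_{w ∈ R} (p(w) / |∂F/∂w(x0,w)|) · D_x F(x0,w), where D_x F(x0,w) is the differential of F(·,w) at x0. -/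
open MeasureTheory Set Filter Topology

variable {E : Type*} [NormedAddCommGroup E] [NormedSpace ℝ E] [CompleteSpace E]

/-- Parametric implicit function theorem for a scalar equation `F (x, w) = t`. -/
lemma exists_implicit_g {F : E × ℝ → ℝ} {V : Set (E × ℝ)} (hV : IsOpen V)
    (hF : ContDiffOn ℝ 1 F V) {x0 : E} {r t : ℝ} (hmem : (x0, r) ∈ V)
    (hFt : F (x0, r) = t) (hc : deriv (fun w => F (x0, w)) r ≠ 0) :
    ∃ g : E → ℝ, g x0 = r ∧ ContinuousAt g x0 ∧
      HasFDerivAt g (-(deriv (fun w => F (x0, w)) r)⁻¹ •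
        fderiv ℝ (fun x : E => F (x, r)) x0) x0 ∧
      ∀ᶠ x in 𝓝 x0, F (x, g x) = t := by
  have hFd : ContDiffAt ℝ 1 F (x0, r) := hF.contDiffAt (hV.mem_nhds hmem)
  set DF := fderiv ℝ F (x0, r) with hDF
  have hFs : HasStrictFDerivAt F DF (x0, r) := hFd.hasStrictFDerivAt one_ne_zero
  -- the slice derivatives
  have hiota : HasDerivAt (fun w : ℝ => ((x0 : E), w)) ((0 : E), (1 : ℝ)) r :=
    HasDerivAt.prodMk (hasDerivAt_const r x0) (hasDerivAt_id r)
  have hcderiv : HasDerivAt (fun w => F (x0, w)) (DF ((0 : E), (1 : ℝ))) r :=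
    hFs.hasFDerivAt.comp_hasDerivAt r hiota
  have hcval : deriv (fun w => F (x0, w)) r = DF ((0 : E), (1 : ℝ)) := hcderiv.deriv
  have hc0 : DF ((0 : E), (1 : ℝ)) ≠ 0 := hcval ▸ hc
  have hxslice : HasFDerivAt (fun x : E => F (x, r))
      (DF.comp ((ContinuousLinearMap.id ℝ E).prod 0)) x0 :=
    hFs.hasFDerivAt.comp x0 (HasFDerivAt.prodMk (hasFDerivAt_id x0) (hasFDerivAt_const r x0))
  have hAval : fderiv ℝ (fun x : E => F (x, r)) x0
      = DF.comp ((ContinuousLinearMap.id ℝ E).prod 0) := hxslice.fderiv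
  have key : ∀ (v : E) (w : ℝ), DF (v, w) = DF (v, 0) + w * DF ((0 : E), (1 : ℝ)) := by
    intro v w
    have h1 : ((v, w) : E × ℝ) = (v, (0:ℝ)) + w • ((0 : E), (1 : ℝ)) := by
      simp [Prod.ext_iff]
    rw [h1, map_add, _root_.map_smul, smul_eq_mul]
  -- the full derivative of `Φ (x,w) = (x, F (x,w))` as a continuous linear equivalence
  set c : ℝ := DF ((0 : E), (1 : ℝ)) with hcdef
  set fwd : (E × ℝ) →L[ℝ] (E × ℝ) := (ContinuousLinearMap.fst ℝ E ℝ).prod DF with hfwd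
  set bwd : (E × ℝ) →L[ℝ] (E × ℝ) := (ContinuousLinearMap.fst ℝ E ℝ).prod
      (c⁻¹ • (ContinuousLinearMap.snd ℝ E ℝ -
        DF.comp ((ContinuousLinearMap.fst ℝ E ℝ).prod 0))) with hbwd
  have hfwd_apply : ∀ q : E × ℝ, fwd q = (q.1, DF q) := fun q => rfl
  have hbwd_apply : ∀ q : E × ℝ, bwd q = (q.1, c⁻¹ * (q.2 - DF (q.1, 0))) := fun q => rfl
  have hleft : ∀ q : E × ℝ, bwd (fwd q) = q := by
    intro ⟨v, w⟩
    rw [hfwd_apply, hbwd_apply]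
    simp only [Prod.ext_iff]
    refine ⟨trivial, ?_⟩
    rw [key v w]
    field_simp
    ring
  have hright : ∀ q : E × ℝ, fwd (bwd q) = q := by
    intro ⟨v, s⟩
    rw [hbwd_apply, hfwd_apply]
    simp only [Prod.ext_iff]
    refine ⟨trivial, ?_⟩
    rw [key v _]
    field_simp
    ring
  set e : (E × ℝ) ≃L[ℝ] (E × ℝ) := ContinuousLinearEquiv.equivOfInverse fwd bwd hleft hright
    with he
  have hecoe : (e : (E × ℝ) →L[ℝ] (E × ℝ)) = fwd := rfl
  set Φ : E × ℝ → E × ℝ := fun q => (q.1, F q) with hPhi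
  have hΦ : HasStrictFDerivAt Φ (e : (E × ℝ) →L[ℝ] (E × ℝ)) (x0, r) := by
    rw [hecoe, hfwd]
    exact HasStrictFDerivAt.prodMk hasStrictFDerivAt_fst hFs
  set Ψ : E × ℝ → E × ℝ := hΦ.localInverse Φ e (x0, r) with hPsi
  have hΦx0 : Φ (x0, r) = (x0, t) := by simp [hPhi, hFt]
  set g : E → ℝ := fun x => (Ψ (x, t)).2 with hg
  have hΨx0 : Ψ (x0, t) = (x0, r) := by
    rw [← hΦx0]; exact hΦ.localInverse_apply_image
  have hgx0 : g x0 = r := by rw [hg]; simp [hΨx0]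
  have htend : Tendsto (fun x : E => (x, t)) (𝓝 x0) (𝓝 (x0, t)) :=
    (continuous_id.prodMk continuous_const).continuousAt
  have hgcont : ContinuousAt g x0 := by
    have h1 : ContinuousAt Ψ (x0, t) := by
      rw [← hΦx0]; exact hΦ.localInverse_continuousAt
    have h2 : Tendsto (fun x : E => Ψ (x, t)) (𝓝 x0) (𝓝 (Ψ (x0, t))) :=
      Filter.Tendsto.comp h1 htend
    exact (continuous_snd.tendsto _).comp h2
  -- eventually `F (x, g x) = t`
  have hri : ∀ᶠ y in 𝓝 ((x0 : E), t), Φ (Ψ y) = y := by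
    rw [← hΦx0]; exact hΦ.eventually_right_inverse
  have hev : ∀ᶠ x in 𝓝 x0, Φ (Ψ (x, t)) = (x, t) := htend.eventually hri
  have hevF : ∀ᶠ x in 𝓝 x0, F (x, g x) = t := by
    filter_upwards [hev] with x hx
    have h1 : (Ψ (x, t)).1 = x := congrArg Prod.fst hx
    have h2 : F (Ψ (x, t)) = t := congrArg Prod.snd hx
    have h3 : Ψ (x, t) = (x, g x) := by
      rw [hg]; exact Prod.ext h1 rfl
    rw [← h3]; exact h2
  -- `g` is differentiable at `x0` with some derivative `L0`
  have hΨd : HasStrictFDerivAt Ψ (e.symm : (E × ℝ) →L[ℝ] (E × ℝ)) ((x0 : E), t) := by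
    rw [← hΦx0]; exact hΦ.to_localInverse
  have hiotaF : HasFDerivAt (fun x : E => (x, t))
      ((ContinuousLinearMap.id ℝ E).prod 0) x0 :=
    HasFDerivAt.prodMk (hasFDerivAt_id x0) (hasFDerivAt_const t x0)
  set L0 : E →L[ℝ] ℝ := (ContinuousLinearMap.snd ℝ E ℝ).comp
      (((e.symm : (E × ℝ) →L[ℝ] (E × ℝ))).comp
        ((ContinuousLinearMap.id ℝ E).prod 0)) with hL0
  have hgd : HasFDerivAt g L0 x0 := by
    have h1 : HasFDerivAt (fun x : E => Ψ (x, t))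
        (((e.symm : (E × ℝ) →L[ℝ] (E × ℝ))).comp
          ((ContinuousLinearMap.id ℝ E).prod 0)) x0 :=
      (hΨd.hasFDerivAt.comp x0 hiotaF)
    exact (ContinuousLinearMap.snd ℝ E ℝ).hasFDerivAt.comp x0 h1
  -- identify `L0`
  have hconst : HasFDerivAt (fun x : E => F (x, g x)) (0 : E →L[ℝ] ℝ) x0 := by
    have h0 : HasFDerivAt (fun _ : E => t) (0 : E →L[ℝ] ℝ) x0 := hasFDerivAt_const t x0
    exact h0.congr_of_eventuallyEq hevF
  have hchain : HasFDerivAt (fun x : E => F (x, g x))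
      (DF.comp ((ContinuousLinearMap.id ℝ E).prod L0)) x0 := by
    have h1 : HasFDerivAt (fun x : E => ((x : E), g x))
        ((ContinuousLinearMap.id ℝ E).prod L0) x0 := HasFDerivAt.prodMk (hasFDerivAt_id x0) hgd
    have hFs' : HasFDerivAt F DF ((x0 : E), g x0) := by rw [hgx0]; exact hFs.hasFDerivAt
    exact hFs'.comp x0 h1
  have hzero : DF.comp ((ContinuousLinearMap.id ℝ E).prod L0) = 0 :=
    hchain.unique hconst
  have hL0eq : L0 = -(deriv (fun w => F (x0, w)) r)⁻¹ •
      fderiv ℝ (fun x : E => F (x, r)) x0 := by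
    ext v
    have h1 : DF (v, L0 v) = 0 := by
      have := congrArg (fun (T : E →L[ℝ] ℝ) => T v) hzero
      simpa using this
    rw [key v (L0 v)] at h1
    have h2 : L0 v = -(DF (v, 0)) / c := by
      field_simp at h1 ⊢
      linarith
    rw [hAval, hcval]
    simp only [ContinuousLinearMap.coe_smul', Pi.smul_apply, ContinuousLinearMap.coe_comp',
      Function.comp_apply, ContinuousLinearMap.prod_apply, ContinuousLinearMap.coe_id',
      id_eq, ContinuousLinearMap.zero_apply, smul_eq_mul]
    rw [h2]
    field_simp
  exact ⟨g, hgx0, hgcont, hL0eq ▸ hgd, hevF⟩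

/-- Away from the level set, the sign of `F (x, ·) - t` is stable for `x` near `x0`. -/
lemma signs_stable {F : E × ℝ → ℝ} {V : Set (E × ℝ)} (hV : IsOpen V)
    (hFc : ContinuousOn F V) {x0 : E} {t : ℝ} {K : Set ℝ} (hK : IsCompact K)
    (hKV : ∀ w ∈ K, ((x0 : E), w) ∈ V) (hne : ∀ w ∈ K, F (x0, w) ≠ t) :
    ∀ᶠ x in 𝓝 x0, ∀ w ∈ K, (F (x, w) ≤ t ↔ F (x0, w) ≤ t) := by
  set V' : Set (E × ℝ) := V ∩ (fun q : E × ℝ => ((x0 : E), q.2)) ⁻¹' V with hV'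
  have hV'open : IsOpen V' :=
    hV.inter (hV.preimage (continuous_const.prodMk continuous_snd))
  have hcont : ContinuousOn (fun q : E × ℝ => (F q - t) * (F (x0, q.2) - t)) V' := by
    have h1 : ContinuousOn F V' := hFc.mono inter_subset_left
    have h2 : ContinuousOn (fun q : E × ℝ => F (x0, q.2)) V' :=
      hFc.comp ((continuous_const.prodMk continuous_snd).continuousOn)
        (fun q hq => hq.2)
    exact (h1.sub continuousOn_const).mul (h2.sub continuousOn_const)
  set W : Set (E × ℝ) := V' ∩ (fun q : E × ℝ => (F q - t) * (F (x0, q.2) - t)) ⁻¹' Ioi 0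
    with hW
  have hWopen : IsOpen W := hcont.isOpen_inter_preimage hV'open isOpen_Ioi
  have hWsub : ({x0} : Set E) ×ˢ K ⊆ W := by
    rintro ⟨x, w⟩ ⟨hx, hw⟩
    have hx' : x = x0 := hx
    subst hx'
    have h0 : F (x, w) - t ≠ 0 := sub_ne_zero.2 (hne w hw)
    exact ⟨⟨hKV w hw, hKV w hw⟩, mem_Ioi.2 (mul_self_pos.2 h0)⟩
  obtain ⟨u, v, huo, hvo, hxu, hKv, huv⟩ :=
    generalized_tube_lemma isCompact_singleton hK hWopen hWsub
  have hx0u : x0 ∈ u := hxu rfl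
  filter_upwards [huo.mem_nhds hx0u] with x hx w hw
  have hmemW : ((x : E), w) ∈ W := huv ⟨hx, hKv hw⟩
  have hpos : 0 < (F (x, w) - t) * (F (x0, w) - t) := hmemW.2
  constructor
  · intro h
    by_contra hcon
    push_neg at hcon
    nlinarith
  · intro h
    have hlt : F (x0, w) < t := lt_of_le_of_ne h (hne w hw)
    nlinarith

/-- Local structure of the sublevel-set integral near a regular root `r`. -/
lemma local_piece {F : E × ℝ → ℝ} {V : Set (E × ℝ)} (hV : IsOpen V)
    (hF : ContDiffOn ℝ 1 F V) {x0 : E} {a b r t δ0 : ℝ} (hδ0 : 0 < δ0)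
    (hVmem : ∀ w ∈ Icc (r - δ0) (r + δ0), ((x0 : E), w) ∈ V)
    (hIoo : Icc (r - δ0) (r + δ0) ⊆ Ioo a b)
    (hFt : F (x0, r) = t) (hc : deriv (fun w => F (x0, w)) r ≠ 0)
    (p : ℝ → ℝ) (hp : Continuous p) :
    ∃ δ ∈ Ioc (0:ℝ) δ0, ∃ g : E → ℝ, ∃ κ ε : ℝ,
      g x0 = r ∧
      ε * (deriv (fun w => F (x0, w)) r)⁻¹ = |deriv (fun w => F (x0, w)) r|⁻¹ ∧
      HasFDerivAt g (-(deriv (fun w => F (x0, w)) r)⁻¹ •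
        fderiv ℝ (fun x : E => F (x, r)) x0) x0 ∧
      ∀ᶠ x in 𝓝 x0,
        ∫ w in {w | w ∈ Icc a b ∧ F (x, w) ≤ t} ∩ Ioo (r - δ) (r + δ), p w
          = κ + ε * ∫ w in (r - δ)..(g x), p w := by
  have hrV : ((x0 : E), r) ∈ V := hVmem r (by constructor <;> nlinarith)
  obtain ⟨g, hgx0, hgcont, hgd, hevF⟩ := exists_implicit_g hV hF hrV hFt hc
  set c := deriv (fun w => F (x0, w)) r with hcdef
  -- ∂F/∂w as a continuous function on V
  have hfderiv_cont : ContinuousOn (fun q => fderiv ℝ F q ((0 : E), (1 : ℝ))) V := by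
    have h1 : ContinuousOn (fderiv ℝ F) V := hF.continuousOn_fderiv_of_isOpen hV le_rfl
    exact (ContinuousLinearMap.apply ℝ ℝ ((0 : E), (1 : ℝ))).continuous.comp_continuousOn h1
  have hslice : ∀ q ∈ V, HasDerivAt (fun w => F (q.1, w)) (fderiv ℝ F q ((0 : E), (1 : ℝ))) q.2 := by
    rintro ⟨x, w⟩ hq
    have hd : HasFDerivAt F (fderiv ℝ F (x, w)) (x, w) :=
      ((hF.contDiffAt (hV.mem_nhds hq)).differentiableAt one_ne_zero).hasFDerivAt
    exact hd.comp_hasDerivAt w (HasDerivAt.prodMk (hasDerivAt_const w x) (hasDerivAt_id w))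
  have hcval : c = fderiv ℝ F (x0, r) ((0 : E), (1 : ℝ)) := (hslice _ hrV).deriv.symm ▸ rfl
  -- a box on which ∂F/∂w keeps the sign of `c`
  set σ : ℝ := if 0 < c then 1 else -1 with hσ
  have hσc : 0 < σ * c := by
    rcases lt_or_gt_of_ne hc with h | h
    · simp only [hσ, if_neg (not_lt.2 h.le)]; nlinarith
    · simp only [hσ, if_pos h]; nlinarith
  set O : Set (E × ℝ) := V ∩ (fun q => σ * fderiv ℝ F q ((0 : E), (1 : ℝ))) ⁻¹' Ioi 0 with hO
  have hOopen : IsOpen O :=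
    (continuousOn_const.mul hfderiv_cont).isOpen_inter_preimage hV isOpen_Ioi
  have hrO : ((x0 : E), r) ∈ O := ⟨hrV, by rw [mem_preimage, ← hcval]; exact hσc⟩
  obtain ⟨ρ, hρpos, hρsub⟩ := Metric.isOpen_iff.1 hOopen _ hrO
  set δ : ℝ := min δ0 (ρ / 2) with hδdef
  have hδpos : 0 < δ := lt_min hδ0 (by linarith)
  have hδle : δ ≤ δ0 := min_le_left _ _
  have hbox : ∀ x ∈ Metric.ball x0 ρ, ∀ w ∈ Icc (r - δ) (r + δ), ((x : E), w) ∈ O := by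
    intro x hx w hw
    have h1 : dist w r < ρ := by
      rw [Real.dist_eq]
      have h2 : δ ≤ ρ / 2 := min_le_right _ _
      rcases hw with ⟨hw1, hw2⟩
      rw [abs_sub_lt_iff]; constructor <;> nlinarith
    have : ((x : E), w) ∈ Metric.ball ((x0 : E), r) ρ := by
      rw [← ball_prod_same]; exact ⟨hx, h1⟩
    exact hρsub this
  have hIccsub : Icc (r - δ) (r + δ) ⊆ Icc a b := fun w hw => by
    have h1 : w ∈ Icc (r - δ0) (r + δ0) := ⟨by nlinarith [hw.1], by nlinarith [hw.2]⟩
    exact ⟨(hIoo h1).1.le, (hIoo h1).2.le⟩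
  have hgIoo : ∀ᶠ x in 𝓝 x0, g x ∈ Ioo (r - δ) (r + δ) := by
    have h1 : Ioo (r - δ) (r + δ) ∈ 𝓝 (g x0) := by
      rw [hgx0]; exact Ioo_mem_nhds (by linarith) (by linarith)
    exact hgcont.preimage_mem_nhds h1
  have hball : ∀ᶠ x in 𝓝 x0, x ∈ Metric.ball x0 ρ :=
    Metric.ball_mem_nhds x0 hρpos
  have hpint : ∀ u v : ℝ, IntervalIntegrable p volume u v := fun u v =>
    hp.intervalIntegrable u v
  -- strict monotonicity of `w ↦ σ * F (x, w)` on the box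
  have hmono : ∀ x ∈ Metric.ball x0 ρ,
      StrictMonoOn (fun w => σ * F (x, w)) (Icc (r - δ) (r + δ)) := by
    intro x hx
    refine strictMonoOn_of_hasDerivWithinAt_pos (convex_Icc _ _) ?_
      (f' := fun w => σ * fderiv ℝ F (x, w) ((0 : E), (1 : ℝ))) ?_ ?_
    · intro w hw
      exact (continuous_const.continuousAt.mul
        ((hslice (x, w) (hbox x hx w hw).1).continuousAt)).continuousWithinAt
    · intro w hw
      have hw' : w ∈ Icc (r - δ) (r + δ) := interior_subset hw
      exact (((hslice (x, w) (hbox x hx w hw').1)).const_mul σ).hasDerivWithinAt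
    · intro w hw
      have hw' : w ∈ Icc (r - δ) (r + δ) := interior_subset hw
      exact (hbox x hx w hw').2
  -- the sign-dependent data
  rcases lt_or_gt_of_ne hc with hcneg | hcpos
  · -- decreasing case : ε = -1
    have hσ1 : σ = -1 := by rw [hσ, if_neg (not_lt.2 hcneg.le)]
    refine ⟨δ, ⟨hδpos, hδle⟩, g, ∫ w in (r - δ)..(r + δ), p w, -1, hgx0, ?_, hgd, ?_⟩
    · rw [abs_of_neg hcneg]; field_simp
    filter_upwards [hgIoo, hball, hevF] with x hgx hxb hFx
    have hmx := hmono x hxb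
    have hgIcc : g x ∈ Icc (r - δ) (r + δ) := ⟨hgx.1.le, hgx.2.le⟩
    have hiff : ∀ w ∈ Icc (r - δ) (r + δ), (F (x, w) ≤ t ↔ g x ≤ w) := by
      intro w hw
      constructor
      · intro h
        by_contra hcon
        push_neg at hcon
        have := hmx hw hgIcc hcon
        rw [hσ1] at this
        simp only [neg_one_mul, neg_lt_neg_iff] at this
        rw [hFx] at this
        linarith
      · intro h
        rcases eq_or_lt_of_le h with rfl | hlt
        · exact le_of_eq hFx
        · have := hmx hgIcc hw hlt
          rw [hσ1] at this
          simp only [neg_one_mul, neg_lt_neg_iff] at this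
          rw [hFx] at this
          linarith
    have hseteq : {w | w ∈ Icc a b ∧ F (x, w) ≤ t} ∩ Ioo (r - δ) (r + δ)
        = Ico (g x) (r + δ) := by
      ext w
      simp only [mem_inter_iff, mem_setOf_eq, mem_Ioo, mem_Ico]
      constructor
      · rintro ⟨⟨hw1, hw2⟩, hw3, hw4⟩
        exact ⟨(hiff w ⟨hw3.le, hw4.le⟩).1 hw2, hw4⟩
      · rintro ⟨hw1, hw2⟩
        have hw3 : r - δ < w := lt_of_lt_of_le hgx.1 hw1
        have hwI : w ∈ Icc (r - δ) (r + δ) := ⟨hw3.le, hw2.le⟩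
        exact ⟨⟨hIccsub hwI, (hiff w hwI).2 hw1⟩, hw3, hw2⟩
    rw [hseteq, integral_Ico_eq_integral_Ioo, ← integral_Ioc_eq_integral_Ioo,
      ← intervalIntegral.integral_of_le hgx.2.le]
    have hadj := intervalIntegral.integral_add_adjacent_intervals
      (hpint (r - δ) (g x)) (hpint (g x) (r + δ))
    linarith
  · -- increasing case : ε = 1
    have hσ1 : σ = 1 := by rw [hσ, if_pos hcpos]
    refine ⟨δ, ⟨hδpos, hδle⟩, g, 0, 1, hgx0, ?_, hgd, ?_⟩
    · rw [abs_of_pos hcpos]; ring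
    filter_upwards [hgIoo, hball, hevF] with x hgx hxb hFx
    have hmx := hmono x hxb
    have hgIcc : g x ∈ Icc (r - δ) (r + δ) := ⟨hgx.1.le, hgx.2.le⟩
    have hiff : ∀ w ∈ Icc (r - δ) (r + δ), (F (x, w) ≤ t ↔ w ≤ g x) := by
      intro w hw
      constructor
      · intro h
        by_contra hcon
        push_neg at hcon
        have := hmx hgIcc hw hcon
        rw [hσ1] at this
        simp only [one_mul] at this
        rw [hFx] at this
        linarith
      · intro h
        rcases eq_or_lt_of_le h with rfl | hlt
        · exact le_of_eq hFx
        · have := hmx hw hgIcc hlt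
          rw [hσ1] at this
          simp only [one_mul] at this
          rw [hFx] at this
          linarith
    have hseteq : {w | w ∈ Icc a b ∧ F (x, w) ≤ t} ∩ Ioo (r - δ) (r + δ)
        = Ioc (r - δ) (g x) := by
      ext w
      simp only [mem_inter_iff, mem_setOf_eq, mem_Ioo, mem_Ioc]
      constructor
      · rintro ⟨⟨hw1, hw2⟩, hw3, hw4⟩
        exact ⟨hw3, (hiff w ⟨hw3.le, hw4.le⟩).1 hw2⟩
      · rintro ⟨hw1, hw2⟩
        have hw4 : w < r + δ := lt_of_le_of_lt hw2 hgx.2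
        have hwI : w ∈ Icc (r - δ) (r + δ) := ⟨hw1.le, hw4.le⟩
        exact ⟨⟨hIccsub hwI, (hiff w hwI).2 hw2⟩, hw1, hw4⟩
    rw [hseteq, ← intervalIntegral.integral_of_le hgx.1.le]
    ring

/-- The x-gradient formula from the proof of the paper's Lemma 1 specialized to a finite
regular level set: `x ↦ ∫_{ {w ∈ [a,b] : F(x,w) ≤ t} } p(w) dw` is differentiable at `x0`
with differential `−Σ_{w ∈ R} (p(w)/|∂F/∂w(x0,w)|) • D_x F(x0,w)`, where
`R = {w ∈ [a,b] : F(x0,w) = t}`. -/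
theorem sublevel_integral_hasFDerivAt_x
    {d : ℕ} (a b : ℝ) (hab : a < b)
    (F : EuclideanSpace ℝ (Fin d) × ℝ → ℝ) (x0 : EuclideanSpace ℝ (Fin d))
    (V : Set (EuclideanSpace ℝ (Fin d) × ℝ)) (hV : IsOpen V)
    (hsub : ({x0} : Set (EuclideanSpace ℝ (Fin d))) ×ˢ Icc a b ⊆ V)
    (hF : ContDiffOn ℝ 1 F V)
    (p : ℝ → ℝ) (hp : Continuous p) (t : ℝ)
    (hfa : F (x0, a) ≠ t) (hfb : F (x0, b) ≠ t)
    (hRfin : {w ∈ Icc a b | F (x0, w) = t}.Finite)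
    (hreg : ∀ w ∈ {w ∈ Icc a b | F (x0, w) = t}, deriv (fun w' => F (x0, w')) w ≠ 0) :
    HasFDerivAt (fun x : EuclideanSpace ℝ (Fin d) =>
        ∫ w in {w | w ∈ Icc a b ∧ F (x, w) ≤ t}, p w)
      (-∑ w ∈ hRfin.toFinset,
          (p w / |deriv (fun w' => F (x0, w')) w|) •
            fderiv ℝ (fun x : EuclideanSpace ℝ (Fin d) => F (x, w)) x0) x0 := by
  set s : Finset ℝ := hRfin.toFinset with hs
  have hmem_s : ∀ {r : ℝ}, r ∈ s ↔ (r ∈ Icc a b ∧ F (x0, r) = t) := fun {r} => by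
    rw [hs, Set.Finite.mem_toFinset]; exact Iff.rfl
  have hroot_lt : ∀ r ∈ s, a < r ∧ r < b := by
    intro r hr
    obtain ⟨⟨h1, h2⟩, h3⟩ := hmem_s.1 hr
    refine ⟨lt_of_le_of_ne h1 ?_, lt_of_le_of_ne h2 ?_⟩
    · rintro rfl; exact hfa h3
    · rintro rfl; exact hfb h3
  -- a uniform small scale δ0
  obtain ⟨δ0, hδ0pos, hIoo0, hsep⟩ :
      ∃ δ0 : ℝ, 0 < δ0 ∧ (∀ r ∈ s, Icc (r - δ0) (r + δ0) ⊆ Ioo a b) ∧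
        (∀ r ∈ s, ∀ r' ∈ s, r ≠ r' → 2 * δ0 ≤ |r - r'|) := by
    classical
    set T : Finset ℝ := ((s.image fun r => r - a) ∪ (s.image fun r => b - r)) ∪
        ((((s ×ˢ s).filter fun q => q.1 ≠ q.2).image fun q => |q.1 - q.2| / 2) ∪ {1}) with hT
    have h1T : (1 : ℝ) ∈ T := by simp [hT]
    have hTne : T.Nonempty := ⟨1, h1T⟩
    have hTpos : ∀ y ∈ T, 0 < y := by
      intro y hy
      simp only [hT, Finset.mem_union, Finset.mem_image, Finset.mem_filter,
        Finset.mem_product, Finset.mem_singleton] at hy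
      rcases hy with ((⟨r, hr, rfl⟩ | ⟨r, hr, rfl⟩) | (⟨⟨r, r'⟩, ⟨⟨hr, hr'⟩, hne⟩, rfl⟩ | rfl))
      · linarith [(hroot_lt r hr).1]
      · linarith [(hroot_lt r hr).2]
      · have : r - r' ≠ 0 := sub_ne_zero.2 hne
        have := abs_pos.2 this
        linarith
      · norm_num
    set m := T.min' hTne with hm
    have hmpos : 0 < m := hTpos _ (T.min'_mem hTne)
    refine ⟨m / 2, by linarith, ?_, ?_⟩
    · intro r hr w hw
      have h1 : m ≤ r - a := T.min'_le _ (Finset.mem_union_left _ (Finset.mem_union_left _ (Finset.mem_image_of_mem _ hr)))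
      have h2 : m ≤ b - r := T.min'_le _ (Finset.mem_union_left _ (Finset.mem_union_right _ (Finset.mem_image_of_mem _ hr)))
      rcases hw with ⟨hw1, hw2⟩
      constructor <;> nlinarith
    · intro r hr r' hr' hne
      have hmem : ((r, r') : ℝ × ℝ) ∈ (s ×ˢ s).filter fun q => q.1 ≠ q.2 :=
        Finset.mem_filter.2 ⟨Finset.mem_product.2 ⟨hr, hr'⟩, hne⟩
      have h1 : m ≤ |r - r'| / 2 := T.min'_le _ (Finset.mem_union_right _
        (Finset.mem_union_left _ (Finset.mem_image_of_mem _ hmem)))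
      linarith
  -- choose the local data at each root
  have HH : ∀ r : ℝ, ∃ q : ℝ × (EuclideanSpace ℝ (Fin d) → ℝ) × ℝ × ℝ, r ∈ s →
      (q.1 ∈ Ioc (0:ℝ) δ0 ∧ q.2.1 x0 = r ∧
        q.2.2.2 * (deriv (fun w' => F (x0, w')) r)⁻¹ = |deriv (fun w' => F (x0, w')) r|⁻¹ ∧
        HasFDerivAt q.2.1 (-(deriv (fun w' => F (x0, w')) r)⁻¹ •
          fderiv ℝ (fun x : EuclideanSpace ℝ (Fin d) => F (x, r)) x0) x0 ∧
        ∀ᶠ x in 𝓝 x0,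
          ∫ w in {w | w ∈ Icc a b ∧ F (x, w) ≤ t} ∩ Ioo (r - q.1) (r + q.1), p w
            = q.2.2.1 + q.2.2.2 * ∫ w in (r - q.1)..(q.2.1 x), p w) := by
    intro r
    by_cases hr : r ∈ s
    · have hVmem : ∀ w ∈ Icc (r - δ0) (r + δ0), ((x0 : EuclideanSpace ℝ (Fin d)), w) ∈ V :=
        fun w hw => hsub ⟨rfl, Ioo_subset_Icc_self (hIoo0 r hr hw)⟩
      obtain ⟨δ, hδ, g, κ, ε, h2, h3, h4, h5⟩ :=
        local_piece hV hF hδ0pos hVmem (hIoo0 r hr) (hmem_s.1 hr).2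
          (hreg r ⟨(hmem_s.1 hr).1, (hmem_s.1 hr).2⟩) p hp
      exact ⟨(δ, g, κ, ε), fun _ => ⟨hδ, h2, h3, h4, h5⟩⟩
    · exact ⟨(1, fun _ => r, 0, 1), fun h => absurd h hr⟩
  choose Q hQ using HH
  set δ : ℝ → ℝ := fun r => (Q r).1 with hδdef
  set g : ℝ → EuclideanSpace ℝ (Fin d) → ℝ := fun r => (Q r).2.1 with hgdef
  set κ : ℝ → ℝ := fun r => (Q r).2.2.1 with hκdef
  set ε : ℝ → ℝ := fun r => (Q r).2.2.2 with hεdef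
  have hδpos : ∀ r ∈ s, 0 < δ r := fun r hr => ((hQ r hr).1).1
  have hδle : ∀ r ∈ s, δ r ≤ δ0 := fun r hr => ((hQ r hr).1).2
  have hgx0 : ∀ r ∈ s, g r x0 = r := fun r hr => (hQ r hr).2.1
  have hεval : ∀ r ∈ s,
      ε r * (deriv (fun w' => F (x0, w')) r)⁻¹ = |deriv (fun w' => F (x0, w')) r|⁻¹ :=
    fun r hr => (hQ r hr).2.2.1
  have hgd : ∀ r ∈ s, HasFDerivAt (g r) (-(deriv (fun w' => F (x0, w')) r)⁻¹ •
      fderiv ℝ (fun x : EuclideanSpace ℝ (Fin d) => F (x, r)) x0) x0 :=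
    fun r hr => (hQ r hr).2.2.2.1
  have hevr : ∀ r ∈ s, ∀ᶠ x in 𝓝 x0,
      ∫ w in {w | w ∈ Icc a b ∧ F (x, w) ≤ t} ∩ Ioo (r - δ r) (r + δ r), p w
        = κ r + ε r * ∫ w in (r - δ r)..(g r x), p w :=
    fun r hr => (hQ r hr).2.2.2.2
  -- the compact set away from the roots
  set K : Set ℝ := Icc a b \ ⋃ r ∈ s, Ioo (r - δ r) (r + δ r) with hK
  have hKcomp : IsCompact K :=
    isCompact_Icc.diff (isOpen_biUnion fun r _ => isOpen_Ioo)
  have hKIcc : K ⊆ Icc a b := diff_subset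
  have hKV : ∀ w ∈ K, ((x0 : EuclideanSpace ℝ (Fin d)), w) ∈ V :=
    fun w hw => hsub ⟨rfl, hKIcc hw⟩
  have hKne : ∀ w ∈ K, F (x0, w) ≠ t := by
    rintro w ⟨hw1, hw2⟩ hFt
    have hws : w ∈ s := hmem_s.2 ⟨hw1, hFt⟩
    exact hw2 (mem_biUnion hws ⟨by linarith [hδpos w hws], by linarith [hδpos w hws]⟩)
  have hsigns := signs_stable hV hF.continuousOn hKcomp hKV hKne
  -- a product neighborhood of `{x0} × Icc a b` inside `V`
  obtain ⟨u0, v0, hu0o, hv0o, hxu0, hIv0, huv0⟩ :=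
    generalized_tube_lemma isCompact_singleton isCompact_Icc hV hsub
  have hbox0 : ∀ x ∈ u0, ∀ w ∈ Icc a b, ((x : EuclideanSpace ℝ (Fin d)), w) ∈ V :=
    fun x hx w hw => huv0 ⟨hx, hIv0 hw⟩
  -- the constant part of the integral
  set CK : ℝ := ∫ w in {w | w ∈ Icc a b ∧ F (x0, w) ≤ t} ∩ K, p w with hCK
  -- the local model function
  set h : EuclideanSpace ℝ (Fin d) → ℝ :=
    fun x => CK + ∑ r ∈ s, (κ r + ε r * ∫ w in (r - δ r)..(g r x), p w) with hh
  -- `h` is differentiable at `x0`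
  have hterm : ∀ r ∈ s,
      HasFDerivAt (fun x => κ r + ε r * ∫ w in (r - δ r)..(g r x), p w)
        ((ε r * p r) • (-(deriv (fun w' => F (x0, w')) r)⁻¹ •
          fderiv ℝ (fun x : EuclideanSpace ℝ (Fin d) => F (x, r)) x0)) x0 := by
    intro r hr
    have h1 : HasDerivAt (fun y => ∫ w in (r - δ r)..y, p w) (p (g r x0)) (g r x0) :=
      (hp.integral_hasStrictDerivAt (r - δ r) (g r x0)).hasDerivAt
    have h2 : HasFDerivAt (fun x => ∫ w in (r - δ r)..(g r x), p w)
        (p (g r x0) • (-(deriv (fun w' => F (x0, w')) r)⁻¹ •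
          fderiv ℝ (fun x : EuclideanSpace ℝ (Fin d) => F (x, r)) x0)) x0 :=
      h1.comp_hasFDerivAt x0 (hgd r hr)
    rw [hgx0 r hr] at h2
    have h3 := (h2.const_mul (ε r)).const_add (κ r)
    rwa [smul_smul] at h3
  have hder : HasFDerivAt h (∑ r ∈ s, (ε r * p r) • (-(deriv (fun w' => F (x0, w')) r)⁻¹ •
      fderiv ℝ (fun x : EuclideanSpace ℝ (Fin d) => F (x, r)) x0)) x0 :=
    (HasFDerivAt.fun_sum hterm).const_add CK
  -- the eventual equality
  have hGh : (fun x : EuclideanSpace ℝ (Fin d) =>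
      ∫ w in {w | w ∈ Icc a b ∧ F (x, w) ≤ t}, p w) =ᶠ[𝓝 x0] h := by
    have hpInt : IntegrableOn p (Icc a b) volume := hp.integrableOn_Icc
    filter_upwards [hsigns, s.eventually_all.2 hevr, hu0o.mem_nhds (hxu0 rfl)]
      with x hsx hevx hxu
    set sub : Set ℝ := {w | w ∈ Icc a b ∧ F (x, w) ≤ t} with hsubdef
    have hsubIcc : sub ⊆ Icc a b := fun w hw => hw.1
    have hFcx : ContinuousOn (fun w => F (x, w)) (Icc a b) :=
      hF.continuousOn.comp (continuous_const.prodMk continuous_id).continuousOn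
        (fun w hw => hbox0 x hxu w hw)
    have hclosed : IsClosed sub := by
      have heq : sub = Icc a b ∩ (fun w => F (x, w)) ⁻¹' Iic t := rfl
      rw [heq]
      exact hFcx.preimage_isClosed_of_isClosed isClosed_Icc isClosed_Iic
    have hmeas : MeasurableSet sub := hclosed.measurableSet
    have hKmeas : MeasurableSet K :=
      measurableSet_Icc.diff (isOpen_biUnion fun r _ => isOpen_Ioo).measurableSet
    have hUmeas : MeasurableSet (⋃ r ∈ s, sub ∩ Ioo (r - δ r) (r + δ r)) :=
      MeasurableSet.biUnion s.countable_toSet fun r _ => hmeas.inter measurableSet_Ioo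
    -- the covering
    have hcover : sub = (sub ∩ K) ∪ ⋃ r ∈ s, (sub ∩ Ioo (r - δ r) (r + δ r)) := by
      ext w
      constructor
      · intro hw
        by_cases hb : w ∈ ⋃ r ∈ s, Ioo (r - δ r) (r + δ r)
        · obtain ⟨r, hr, hwr⟩ := mem_iUnion₂.1 hb
          exact Or.inr (mem_iUnion₂.2 ⟨r, hr, hw, hwr⟩)
        · exact Or.inl ⟨hw, hw.1, hb⟩
      · rintro (hw | hw)
        · exact hw.1
        · obtain ⟨r, hr, hwr, _⟩ := mem_iUnion₂.1 hw
          exact hwr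
    have hdisj : Disjoint (sub ∩ K) (⋃ r ∈ s, sub ∩ Ioo (r - δ r) (r + δ r)) := by
      rw [Set.disjoint_left]
      rintro w ⟨_, _, hwK⟩ hw2
      obtain ⟨r, hr, _, hwr⟩ := mem_iUnion₂.1 hw2
      exact hwK (mem_biUnion hr hwr)
    have hint1 : IntegrableOn p (sub ∩ K) volume :=
      hpInt.mono_set (fun w hw => hsubIcc hw.1)
    have hint2 : IntegrableOn p (⋃ r ∈ s, sub ∩ Ioo (r - δ r) (r + δ r)) volume := by
      refine hpInt.mono_set ?_
      rintro w hw
      obtain ⟨r, hr, hwr, _⟩ := mem_iUnion₂.1 hw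
      exact hsubIcc hwr
    have hpair : (↑s : Set ℝ).Pairwise
        (Function.onFun Disjoint fun r => sub ∩ Ioo (r - δ r) (r + δ r)) := by
      intro r hr r' hr' hne
      have hr := Finset.mem_coe.1 hr
      have hr' := Finset.mem_coe.1 hr'
      rw [Function.onFun, Set.disjoint_left]
      rintro w ⟨_, hw1⟩ ⟨_, hw2⟩
      have habs : |r - r'| ≤ |r - w| + |w - r'| := abs_sub_le r w r'
      have h1 : |r - w| < δ r := abs_sub_lt_iff.2 ⟨by linarith [hw1.1], by linarith [hw1.2]⟩
      have h2 : |w - r'| < δ r' := abs_sub_lt_iff.2 ⟨by linarith [hw2.2], by linarith [hw2.1]⟩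
      have := hsep r hr r' hr' hne
      have := hδle r hr
      have := hδle r' hr'
      linarith
    -- split the integral
    have hsplit : ∫ w in sub, p w = (∫ w in sub ∩ K, p w) +
        ∑ r ∈ s, ∫ w in sub ∩ Ioo (r - δ r) (r + δ r), p w := by
      conv_lhs => rw [hcover]
      rw [setIntegral_union hdisj hUmeas hint1 hint2]
      congr 1
      exact integral_biUnion_finset s (fun r _ => hmeas.inter measurableSet_Ioo) hpair
        (fun r _ => hpInt.mono_set (fun w hw => hsubIcc hw.1))
    -- the K-part is constant
    have hKeq : sub ∩ K = {w | w ∈ Icc a b ∧ F (x0, w) ≤ t} ∩ K := by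
      ext w
      simp only [mem_inter_iff, mem_setOf_eq]
      constructor
      · rintro ⟨⟨h1, h2⟩, hk⟩
        exact ⟨⟨h1, (hsx w hk).1 h2⟩, hk⟩
      · rintro ⟨⟨h1, h2⟩, hk⟩
        exact ⟨⟨h1, (hsx w hk).2 h2⟩, hk⟩
    rw [hsplit, hKeq]
    rw [hh]
    congr 1
    exact Finset.sum_congr rfl fun r hr => hevx r hr
  -- conclude
  have hfinal := hder.congr_of_eventuallyEq hGh
  have hDeq : ∑ r ∈ s, (ε r * p r) • (-(deriv (fun w' => F (x0, w')) r)⁻¹ •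
      fderiv ℝ (fun x : EuclideanSpace ℝ (Fin d) => F (x, r)) x0)
      = -∑ w ∈ hRfin.toFinset, (p w / |deriv (fun w' => F (x0, w')) w|) •
          fderiv ℝ (fun x : EuclideanSpace ℝ (Fin d) => F (x, w)) x0 := by
    rw [← Finset.sum_neg_distrib]
    refine Finset.sum_congr rfl fun r hr => ?_
    have hεr := hεval r hr
    rw [smul_smul]
    have hcoef : ε r * p r * -(deriv (fun w' => F (x0, w')) r)⁻¹
        = -(p r / |deriv (fun w' => F (x0, w')) r|) := by
      rw [div_eq_mul_inv, ← hεr]; ring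
    rw [hcoef, neg_smul]
  rwa [hDeq] at hfinal
end

section
/- Let E be a finite-dimensional real normed vector space, let L ≥ 1, and let f_1, …, f_L : E → ℝ each be differentiable at x0 ∈ E with the values f_1(x0), …, f_L(x0) pairwise distinct. Fix 1 ≤ m ≤ L and let T ⊆ {1,…,L} be the set of m indices i for which f_i(x0) is among the m largest of the values f_1(x0), …, f_L(x0). Then the function S_m(x) := (1/m) · (sum of the m largest values among f_1(x), …, f_L(x)) is differentiable at x0, with differential (1/m) Σ_{i ∈ T} Df_i(x0). -/
/-- The average of the `m` largest values of a finite list of reals: the sum of the top `m`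
entries of the list sorted in increasing order (i.e. with the `L - m` smallest dropped),
divided by `m`. Used as the Monte Carlo CVaR estimator. -/
noncomputable def avgTopM (L m : ℕ) (g : Fin L → ℝ) : ℝ :=
  (1 / (m : ℝ)) * (((Finset.univ.val.map g).sort (· ≤ ·)).drop (L - m)).sum


lemma filter_rank_eq_drop : ∀ (s : List ℝ), s.Pairwise (· < ·) → ∀ m : ℕ,
    s.filter (fun y => decide ((s.filter fun z => decide (y < z)).length < m))
      = s.drop (s.length - m) := by
  intro s
  induction s with
  | nil => intro _ m; simp
  | cons a t ih =>
    intro h m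
    have ha : ∀ y ∈ t, a < y := fun y hy => (List.pairwise_cons.1 h).1 y hy
    have ht : t.Pairwise (· < ·) := (List.pairwise_cons.1 h).2
    have hfa : (a :: t).filter (fun z => decide (a < z)) = t := by
      rw [List.filter_cons]
      simp only [lt_irrefl, decide_false, Bool.false_eq_true, if_false]
      exact List.filter_eq_self.2 (fun y hy => by simpa using ha y hy)
    have hfy : ∀ y ∈ t, (a :: t).filter (fun z => decide (y < z))
        = t.filter (fun z => decide (y < z)) := by
      intro y hy
      rw [List.filter_cons]
      have : ¬ y < a := not_lt.2 (le_of_lt (ha y hy))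
      simp [this]
    have hcong : t.filter (fun y => decide (((a :: t).filter fun z => decide (y < z)).length < m))
        = t.filter (fun y => decide ((t.filter fun z => decide (y < z)).length < m)) := by
      apply List.filter_congr
      intro y hy
      rw [hfy y hy]
    rw [List.filter_cons, hcong, ih ht m, hfa]
    by_cases hc : t.length < m
    · simp only [hc, decide_true, if_true]
      have h1 : (a :: t).length - m = 0 := by simp; omega
      have h2 : t.length - m = 0 := by omega
      rw [h1, h2]
      simp
    · have : (a :: t).length - m = (t.length - m) + 1 := by simp; omega
      rw [this, List.drop_succ_cons]
      simp [hc]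

lemma sum_drop_sort (L m : ℕ) (hmL : m ≤ L) (g : Fin L → ℝ) (hg : Function.Injective g) :
    ((Finset.univ.filter fun i : Fin L =>
        (Finset.univ.filter fun j : Fin L => g i < g j).card < m).card = m) ∧
    (((Finset.univ.val.map g).sort (· ≤ ·)).drop (L - m)).sum
      = ∑ i ∈ Finset.univ.filter (fun i : Fin L =>
          (Finset.univ.filter fun j : Fin L => g i < g j).card < m), g i := by
  set s : List ℝ := (Finset.univ.val.map g).sort (· ≤ ·) with hs_def
  have hs_ms : (↑s : Multiset ℝ) = Finset.univ.val.map g := Multiset.sort_eq _ _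
  have hnodup_m : (Finset.univ.val.map g).Nodup :=
    Multiset.Nodup.map hg Finset.univ.nodup
  have hs_nodup : s.Nodup := by rw [← Multiset.coe_nodup, hs_ms]; exact hnodup_m
  have hlt : s.Pairwise (· < ·) :=
    List.sortedLT_iff_pairwise.1 ((List.sortedLE_iff_pairwise.2 (Multiset.pairwise_sort _ _)).sortedLT_of_nodup hs_nodup)
  have hlen : s.length = L := by
    have : Multiset.card (↑s : Multiset ℝ) = L := by
      rw [hs_ms]; simp
    simpa using this
  -- the predicate conversion
  have hpred : ∀ y : ℝ, (s.filter fun z => decide (y < z)).length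
      = (Finset.univ.filter fun j : Fin L => y < g j).card := by
    intro y
    have h1 : (↑(s.filter fun z => decide (y < z)) : Multiset ℝ)
        = Multiset.filter (fun z => y < z) ↑s := by
      simp [Multiset.filter_coe]
    have h2 : Multiset.filter (fun z => y < z) (Finset.univ.val.map g)
        = Multiset.map g (Multiset.filter (fun j => y < g j) Finset.univ.val) := by
      rw [Multiset.filter_map]; rfl
    have := congrArg Multiset.card h1
    rw [hs_ms, h2] at this
    rw [Finset.card, Finset.filter_val]
    simpa using this
  have hdrop : s.drop (s.length - m)
      = s.filter (fun y => decide ((Finset.univ.filter fun j : Fin L => y < g j).card < m)) := by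
    rw [← filter_rank_eq_drop s hlt m]
    apply List.filter_congr
    intro y _
    rw [hpred y]
  have hfilter_ms : (↑(s.filter (fun y =>
        decide ((Finset.univ.filter fun j : Fin L => y < g j).card < m))) : Multiset ℝ)
      = Multiset.map g ((Finset.univ.filter fun i : Fin L =>
          (Finset.univ.filter fun j : Fin L => g i < g j).card < m).val) := by
    rw [← Multiset.filter_coe (p := fun y => (Finset.univ.filter fun j : Fin L => y < g j).card < m),
      hs_ms, Multiset.filter_map, Finset.filter_val]
    rfl
  constructor
  · have := congrArg Multiset.card hfilter_ms
    simp only [Multiset.card_map, Multiset.coe_card] at this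
    rw [Finset.card, ← this, ← hdrop, List.length_drop, hlen]
    omega
  · rw [hlen] at hdrop
    rw [hdrop]
    have := congrArg Multiset.sum hfilter_ms
    rw [Finset.sum_eq_multiset_sum]
    simpa using this

/-- Differentiability of the Monte Carlo CVaR estimator: if `f_1(x0), …, f_L(x0)` are
pairwise distinct and each `f_i` is differentiable at `x0`, then the average `S_m` of the
`m` largest of the values `f_1(x), …, f_L(x)` is differentiable at `x0`, with differential
`(1/m) Σ_{i ∈ T} Df_i(x0)` where `T` is the set of the `m` indices whose values at `x0`
are among the `m` largest. -/
theorem avgTopM_hasFDerivAt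
    {E : Type*} [NormedAddCommGroup E] [NormedSpace ℝ E] [FiniteDimensional ℝ E]
    (L : ℕ) (hL : 1 ≤ L) (f : Fin L → E → ℝ) (x0 : E)
    (hdiff : ∀ i, DifferentiableAt ℝ (f i) x0)
    (hdistinct : Function.Injective (fun i => f i x0))
    (m : ℕ) (hm1 : 1 ≤ m) (hmL : m ≤ L) :
    (Finset.univ.filter fun i : Fin L =>
        (Finset.univ.filter fun j : Fin L => f i x0 < f j x0).card < m).card = m ∧
    HasFDerivAt (fun x : E => avgTopM L m fun i => f i x)
      ((1 / (m : ℝ)) •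
        ∑ i ∈ Finset.univ.filter fun i : Fin L =>
            (Finset.univ.filter fun j : Fin L => f i x0 < f j x0).card < m,
          fderiv ℝ (f i) x0) x0 := by
  classical
  obtain ⟨hcard, -⟩ := sum_drop_sort L m hmL (fun i => f i x0) hdistinct
  refine ⟨hcard, ?_⟩
  set T : Finset (Fin L) := Finset.univ.filter fun i : Fin L =>
      (Finset.univ.filter fun j : Fin L => f i x0 < f j x0).card < m with hT_def
  have hT : HasFDerivAt (fun x => (1/(m:ℝ)) * ∑ i ∈ T, f i x)
      ((1/(m:ℝ)) • ∑ i ∈ T, fderiv ℝ (f i) x0) x0 :=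
    (HasFDerivAt.fun_sum fun i _ => (hdiff i).hasFDerivAt).const_mul _
  apply hT.congr_of_eventuallyEq
  have hev : ∀ᶠ x in nhds x0, ∀ i j : Fin L, f i x0 < f j x0 → f i x < f j x := by
    rw [Filter.eventually_all]
    intro i
    rw [Filter.eventually_all]
    intro j
    by_cases hij : f i x0 < f j x0
    · exact ((hdiff i).continuousAt.tendsto.eventually_lt
        (hdiff j).continuousAt.tendsto hij).mono fun x h _ => h
    · exact Filter.Eventually.of_forall fun x h => absurd h hij
  refine hev.mono fun x hx => ?_
  -- on this set, the order is fully preserved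
  have horder : ∀ i j : Fin L, f i x < f j x ↔ f i x0 < f j x0 := by
    intro i j
    constructor
    · intro h
      rcases lt_trichotomy (f i x0) (f j x0) with h' | h' | h'
      · exact h'
      · exact absurd (congrArg (fun y => f y x) (hdistinct h')) (by intro (hh : f i x = f j x); rw [hh] at h; exact lt_irrefl _ h)
      · exact absurd (hx j i h') (not_lt.2 (le_of_lt h))
    · exact hx i j
  have hginj : Function.Injective (fun i => f i x) := by
    intro i j hij
    by_contra hne
    rcases lt_trichotomy (f i x0) (f j x0) with h' | h' | h'
    · exact absurd (hx i j h') (by simp [hij])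
    · exact hne (hdistinct h')
    · exact absurd (hx j i h') (by simp [hij])
  obtain ⟨-, hsum⟩ := sum_drop_sort L m hmL (fun i => f i x) hginj
  show avgTopM L m (fun i => f i x) = _
  rw [avgTopM, hsum]
  congr 1
  apply Finset.sum_congr
  · ext i
    simp only [Finset.mem_filter, Finset.mem_univ, true_and, hT_def]
    have : (Finset.univ.filter fun j : Fin L => f i x < f j x)
        = (Finset.univ.filter fun j : Fin L => f i x0 < f j x0) := by
      ext j; simp [horder i j]
    rw [this]
  · intros; rfl
end

section
/- Let E be a finite-dimensional real normed vector space, let L ≥ 1, and let f_1, …, f_L : E → ℝ each be differentiable at x0 ∈ E with the values f_1(x0), …, f_L(x0) pairwise distinct. Fix 1 ≤ k ≤ L and let i* be the unique index such that f_{i*}(x0) is the k-th largest of the values f_1(x0), …, f_L(x0). Then the function V_k(x) := (k-th largest value among f_1(x), …, f_L(x)) is differentiable at x0, with differential Df_{i*}(x0). -/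
/-AUX-/
lemma kthLargest_aux {L : ℕ} (g : Fin L → ℝ) (σ : Equiv.Perm (Fin L))
    (hσ : Monotone (g ∘ σ)) :
    ((Finset.univ.val.map g).sort (· ≤ ·)) = List.ofFn (g ∘ σ) := by
  refine List.Perm.eq_of_pairwise' (Multiset.pairwise_sort _ _)
    (List.sortedLE_iff_pairwise.mp (List.sortedLE_ofFn_iff.mpr hσ)) ?_
  have h1 : (List.ofFn (g ∘ σ) : Multiset ℝ) = Finset.univ.val.map g := by
    rw [← List.map_ofFn, List.ofFn_eq_map]
    have : ((List.finRange L).map σ : Multiset (Fin L)) = Finset.univ.val := by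
      have := Finset.map_univ_equiv σ
      apply_fun Finset.val at this
      simpa [Finset.map_val, Multiset.map_map, Fin.univ_def, List.finRange] using this
    calc (↑((List.map σ (List.finRange L)).map g) : Multiset ℝ)
        = Multiset.map g ↑(List.map σ (List.finRange L)) := by simp
      _ = Multiset.map g Finset.univ.val := by rw [this]
  have h2 : (↑((Finset.univ.val.map g).sort (· ≤ ·)) : Multiset ℝ)
      = (List.ofFn (g ∘ σ) : Multiset ℝ) :=
    (Multiset.sort_eq _ _).trans h1.symm
  exact Quotient.exact h2

/-- The `k`-th largest value (1-indexed) of a finite list of reals: the entry at position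
`L - k` (0-indexed) of the list sorted in increasing order. Used as the Monte Carlo VaR
estimator. -/
noncomputable def kthLargest (L k : ℕ) (g : Fin L → ℝ) : ℝ :=
  (((Finset.univ.val.map g).sort (· ≤ ·)).getD (L - k) 0)

/-- Differentiability of the Monte Carlo VaR estimator: if `f_1(x0), …, f_L(x0)` are
pairwise distinct and each `f_i` is differentiable at `x0`, and `i*` is the (unique) index
with `f_{i*}(x0)` the `k`-th largest of the values at `x0`, then the order statistic
`V_k(x) = (k`-th largest of `f_1(x), …, f_L(x))` is differentiable at `x0` with
differential `Df_{i*}(x0)`. -/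
theorem kthLargest_hasFDerivAt
    {E : Type*} [NormedAddCommGroup E] [NormedSpace ℝ E] [FiniteDimensional ℝ E]
    (L : ℕ) (hL : 1 ≤ L) (f : Fin L → E → ℝ) (x0 : E)
    (hdiff : ∀ i, DifferentiableAt ℝ (f i) x0)
    (hdistinct : Function.Injective (fun i => f i x0))
    (k : ℕ) (hk1 : 1 ≤ k) (hkL : k ≤ L)
    (istar : Fin L) (histar : f istar x0 = kthLargest L k fun i => f i x0) :
    HasFDerivAt (fun x : E => kthLargest L k fun i => f i x)
      (fderiv ℝ (f istar) x0) x0 := by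
  set g : Fin L → ℝ := fun i => f i x0 with hg
  set σ := Tuple.sort g with hσdef
  have hmono : Monotone (g ∘ σ) := Tuple.monotone_sort g
  have hstrict : StrictMono (g ∘ σ) :=
    hmono.strictMono_of_injective (hdistinct.comp σ.injective)
  have hLk : L - k < L := by omega
  let m : Fin L := ⟨L - k, hLk⟩
  have hval : ∀ x : E, Monotone ((fun i => f i x) ∘ σ) →
      kthLargest L k (fun i => f i x) = f (σ m) x := by
    intro x hx
    unfold kthLargest
    rw [kthLargest_aux _ σ hx, List.getD_eq_getElem _ _ (by simpa using hLk)]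
    simp [m]
  have hσm : σ m = istar := by
    apply hdistinct
    show g (σ m) = g istar
    show g (σ m) = g istar
    rw [show g istar = f istar x0 from rfl, histar, hval x0 hmono]
  have hev : (fun x : E => kthLargest L k fun i => f i x) =ᶠ[nhds x0]
      fun x => f istar x := by
    have hcont : ∀ i, ContinuousAt (f i) x0 := fun i => (hdiff i).continuousAt
    have h1 : ∀ᶠ x in nhds x0, ∀ i j : Fin L, g i < g j → f i x < f j x := by
      rw [Filter.eventually_all]
      intro i
      rw [Filter.eventually_all]
      intro j
      by_cases hij : g i < g j
      · filter_upwards [(hcont i).eventually_lt (hcont j) hij] with x hx _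
        exact hx
      · filter_upwards with x hx
        exact absurd hx hij
    filter_upwards [h1] with x hx
    have hmx : Monotone ((fun i => f i x) ∘ σ) := by
      intro a b hab
      rcases eq_or_lt_of_le hab with rfl | h
      · exact le_rfl
      · exact (hx _ _ (hstrict h)).le
    rw [hval x hmx, hσm]
  exact ((hdiff istar).hasFDerivAt).congr_of_eventuallyEq hev
end
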